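/- arXiv:2508.03887 — 5 statements merged into one kernel-verified Lean document; each statement's English description precedes it below -/
import Mathlib

section
/- Let n > 1 and let K, L ⊆ ℝⁿ be nonempty closed convex sets whose cross covariogram g = g_{K,L} satisfies 0 < g(a) < ∞ for some a ∈ ℝⁿ. Then g^{1/n} is concave on the convex set K + (−L) = {x : K ∩ (L + x) ≠ ∅}: for all x₀, x₁ ∈ K + (−L) and all t ∈ [0,1], g((1−t)x₀ + t x₁)^{1/n} ≥ (1−t) g(x₀)^{1/n} + t g(x₁)^{1/n}. -/
open MeasureTheory Set Pointwise
open scoped ENNReal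


lemma ioo_subset_convex {X : Set ℝ} (hX : Convex ℝ X) (hne : X.Nonempty)
    (hbb : BddBelow X) (hba : BddAbove X) : Ioo (sInf X) (sSup X) ⊆ X := by
  intro z hz
  obtain ⟨x, hxX, hxz⟩ := exists_lt_of_csInf_lt hne hz.1
  obtain ⟨y, hyX, hzy⟩ := exists_lt_of_lt_csSup hne hz.2
  exact hX.ordConnected.out hxX hyX ⟨hxz.le, hzy.le⟩

lemma vol_convex_1d_le {X : Set ℝ} (hbb : BddBelow X) (hba : BddAbove X) :
    volume X ≤ ENNReal.ofReal (sSup X - sInf X) := by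
  calc volume X ≤ volume (Icc (sInf X) (sSup X)) :=
        measure_mono fun x hx => ⟨csInf_le hbb hx, le_csSup hba hx⟩
    _ = ENNReal.ofReal (sSup X - sInf X) := Real.volume_Icc

lemma sumset1d {X Y S : Set ℝ} (hX : Convex ℝ X) (hXne : X.Nonempty)
    (hXb : Bornology.IsBounded X) (hY : Convex ℝ Y) (hYne : Y.Nonempty)
    (hYb : Bornology.IsBounded Y) (hsub : X + Y ⊆ S) :
    volume X + volume Y ≤ volume S := by
  have hXbb := hXb.bddBelow; have hXba := hXb.bddAbove
  have hYbb := hYb.bddBelow; have hYba := hYb.bddAbove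
  set a := sInf X; set b := sSup X; set c := sInf Y; set d := sSup Y
  have hab : a ≤ b := Real.sInf_le_sSup _ hXbb hXba
  have hcd : c ≤ d := Real.sInf_le_sSup _ hYbb hYba
  rcases eq_or_lt_of_le hab with hab' | hab'
  · have hX0 : volume X = 0 := le_antisymm
      ((vol_convex_1d_le hXbb hXba).trans (by show ENNReal.ofReal (b - a) ≤ 0; rw [← hab']; simp)) (zero_le)
    obtain ⟨x₀, hx₀⟩ := hXne
    have hsub2 : x₀ +ᵥ Y ⊆ S := fun w hw => by
      obtain ⟨y, hy, rfl⟩ := hw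
      exact hsub (Set.add_mem_add hx₀ hy)
    calc volume X + volume Y = volume (x₀ +ᵥ Y) := by
          rw [hX0, zero_add, measure_vadd]
      _ ≤ volume S := measure_mono hsub2
  rcases eq_or_lt_of_le hcd with hcd' | hcd'
  · have hY0 : volume Y = 0 := le_antisymm
      ((vol_convex_1d_le hYbb hYba).trans (by show ENNReal.ofReal (d - c) ≤ 0; rw [← hcd']; simp)) (zero_le)
    obtain ⟨y₀, hy₀⟩ := hYne
    have hsub2 : y₀ +ᵥ X ⊆ S := fun w hw => by
      obtain ⟨x, hx, rfl⟩ := hw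
      have : x + y₀ ∈ S := hsub (Set.add_mem_add hx hy₀)
      simpa [add_comm] using this
    calc volume X + volume Y = volume (y₀ +ᵥ X) := by
          rw [hY0, add_zero, measure_vadd]
      _ ≤ volume S := measure_mono hsub2
  have hIoo : Ioo (a + c) (b + d) ⊆ S := by
    intro z hz
    obtain ⟨hz1, hz2⟩ := hz
    set m := max a (z - d) with hm
    set M := min b (z - c) with hM
    have h1 : m < M := by
      apply max_lt <;> apply lt_min
      · exact hab'
      · linarith
      · linarith
      · linarith
    set x : ℝ := (m + M) / 2 with hxdef
    have hmx : m < x := by rw [hxdef]; linarith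
    have hxM : x < M := by rw [hxdef]; linarith
    have hx1 : a < x := lt_of_le_of_lt (le_max_left a (z - d)) hmx
    have hx2 : x < b := lt_of_lt_of_le hxM (min_le_left b (z - c))
    have hx3 : z - d < x := lt_of_le_of_lt (le_max_right a (z - d)) hmx
    have hx4 : x < z - c := lt_of_lt_of_le hxM (min_le_right b (z - c))
    have hxX : x ∈ X := ioo_subset_convex hX hXne hXbb hXba ⟨hx1, hx2⟩
    have hyY : z - x ∈ Y := ioo_subset_convex hY hYne hYbb hYba ⟨by linarith, by linarith⟩
    have : x + (z - x) ∈ S := hsub (Set.add_mem_add hxX hyY)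
    simpa using this
  calc volume X + volume Y
      ≤ ENNReal.ofReal (b - a) + ENNReal.ofReal (d - c) :=
        add_le_add (vol_convex_1d_le hXbb hXba) (vol_convex_1d_le hYbb hYba)
    _ = ENNReal.ofReal ((b + d) - (a + c)) := by
        rw [← ENNReal.ofReal_add (by linarith) (by linarith)]; ring_nf
    _ = volume (Ioo (a + c) (b + d)) := Real.volume_Ioo.symm
    _ ≤ volume S := measure_mono hIoo

-- AM-GM in ENNReal
lemma ennreal_amgm {a b : ℝ≥0∞} (ha : a ≠ ⊤) (hb : b ≠ ⊤) {w : ℝ} (hw0 : 0 < w) (hw1 : w < 1) :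
    a ^ (1 - w) * b ^ w ≤ ENNReal.ofReal (1 - w) * a + ENNReal.ofReal w * b := by
  have h1w : 0 ≤ 1 - w := by linarith
  calc a ^ (1 - w) * b ^ w
      = ENNReal.ofReal (a.toReal) ^ (1 - w) * ENNReal.ofReal (b.toReal) ^ w := by
        rw [ENNReal.ofReal_toReal ha, ENNReal.ofReal_toReal hb]
    _ = ENNReal.ofReal (a.toReal ^ (1 - w) * b.toReal ^ w) := by
        rw [ENNReal.ofReal_rpow_of_nonneg ENNReal.toReal_nonneg h1w,
          ENNReal.ofReal_rpow_of_nonneg ENNReal.toReal_nonneg hw0.le,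
          ENNReal.ofReal_mul (Real.rpow_nonneg ENNReal.toReal_nonneg _)]
    _ ≤ ENNReal.ofReal ((1 - w) * a.toReal + w * b.toReal) :=
        ENNReal.ofReal_le_ofReal
          (Real.geom_mean_le_arith_mean2_weighted h1w hw0.le ENNReal.toReal_nonneg
            ENNReal.toReal_nonneg (by ring))
    _ = ENNReal.ofReal (1 - w) * a + ENNReal.ofReal w * b := by
        rw [ENNReal.ofReal_add (by positivity) (by positivity),
          ENNReal.ofReal_mul h1w, ENNReal.ofReal_mul hw0.le,
          ENNReal.ofReal_toReal ha, ENNReal.ofReal_toReal hb]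

lemma layer_cake_scaled (g : ℝ → ℝ≥0∞) (hg : Measurable g) (hfin : ∀ r, g r ≠ ⊤)
    {S : ℝ≥0∞} (hS0 : S ≠ 0) (hStop : S ≠ ⊤) :
    ∫⁻ u in Ioi (0:ℝ), volume {r | ENNReal.ofReal u * S < g r} = S⁻¹ * ∫⁻ r, g r := by
  have hdivtop : ∀ r, g r / S ≠ ⊤ := by
    intro r
    simp [ENNReal.div_eq_top, hfin r, hS0]
  have key := lintegral_eq_lintegral_meas_lt (volume : Measure ℝ)
    (f := fun r => (g r / S).toReal)
    (Filter.Eventually.of_forall fun r => ENNReal.toReal_nonneg)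
    ((hg.div measurable_const).ennreal_toReal.aemeasurable)
  have lhs_eq : ∫⁻ r, ENNReal.ofReal ((g r / S).toReal) = S⁻¹ * ∫⁻ r, g r := by
    have : ∀ r, ENNReal.ofReal ((g r / S).toReal) = g r * S⁻¹ := fun r => by
      rw [ENNReal.ofReal_toReal (hdivtop r), div_eq_mul_inv]
    simp_rw [this]
    rw [lintegral_mul_const' S⁻¹ _ (ENNReal.inv_ne_top.2 hS0), mul_comm]
  have rhs_eq : ∫⁻ u in Ioi (0:ℝ), volume {r | u < (g r / S).toReal}
      = ∫⁻ u in Ioi (0:ℝ), volume {r | ENNReal.ofReal u * S < g r} := by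
    apply setLIntegral_congr_fun measurableSet_Ioi
    refine fun u hu => ?_
    dsimp only
    congr 1
    ext r
    simp only [mem_setOf_eq]
    rw [← ENNReal.ofReal_lt_iff_lt_toReal (le_of_lt hu) (hdivtop r),
      ENNReal.lt_div_iff_mul_lt (Or.inl hS0) (Or.inl hStop)]
  rw [← rhs_eq, ← key, lhs_eq]

lemma pl_dim1 {t : ℝ} (ht0 : 0 < t) (ht1 : t < 1)
    (f g h : ℝ → ℝ≥0∞) (Cf Cg Ch : ℝ≥0∞)
    (hf : Measurable f) (hg : Measurable g) (hh : Measurable h)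
    (hfC : ∀ r, f r ≤ Cf) (hCf : Cf ≠ ⊤)
    (hgC : ∀ r, g r ≤ Cg) (hCg : Cg ≠ ⊤)
    (hhC : ∀ r, h r ≤ Ch) (hCh : Ch ≠ ⊤)
    (hgs : Bornology.IsBounded (Function.support g))
    (hhs : Bornology.IsBounded (Function.support h))
    (hqg : ∀ ℓ : ℝ≥0∞, Convex ℝ {r | ℓ < g r})
    (hqh : ∀ ℓ : ℝ≥0∞, Convex ℝ {r | ℓ < h r})
    (key : ∀ x y : ℝ, g x ^ (1 - t) * h y ^ t ≤ f ((1 - t) * x + t * y)) :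
    (∫⁻ r, g r) ^ (1 - t) * (∫⁻ r, h r) ^ t ≤ ∫⁻ r, f r := by
  have ht0' : (0:ℝ) < 1 - t := by linarith
  -- trivial cases: sup zero
  set Sg := ⨆ r, g r with hSgdef
  set Sh := ⨆ r, h r with hShdef
  rcases eq_or_ne Sg 0 with hSg0 | hSg0
  · have : ∫⁻ r, g r = 0 := by
      have : ∀ r, g r = 0 := fun r => le_antisymm ((le_iSup g r).trans hSg0.le) (zero_le)
      simp [this]
    rw [this, ENNReal.zero_rpow_of_pos ht0', zero_mul]
    exact zero_le
  rcases eq_or_ne Sh 0 with hSh0 | hSh0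
  · have : ∫⁻ r, h r = 0 := by
      have : ∀ r, h r = 0 := fun r => le_antisymm ((le_iSup h r).trans hSh0.le) (zero_le)
      simp [this]
    rw [this, ENNReal.zero_rpow_of_pos ht0, mul_zero]
    exact zero_le
  have hSgtop : Sg ≠ ⊤ := (iSup_le hgC).trans_lt hCg.lt_top |>.ne
  have hShtop : Sh ≠ ⊤ := (iSup_le hhC).trans_lt hCh.lt_top |>.ne
  have hgfin : ∀ r, g r ≠ ⊤ := fun r => ((hgC r).trans_lt hCg.lt_top).ne
  have hhfin : ∀ r, h r ≠ ⊤ := fun r => ((hhC r).trans_lt hCh.lt_top).ne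
  have hffin : ∀ r, f r ≠ ⊤ := fun r => ((hfC r).trans_lt hCf.lt_top).ne
  -- finiteness of integrals
  have hIg' : ∫⁻ r, g r < ⊤ := by
    have hsub : ∀ r, g r ≤ (closure (Function.support g)).indicator (fun _ => Cg) r := by
      intro r
      by_cases hr : g r = 0
      · simp [hr]
      · rw [indicator_of_mem (subset_closure (Function.mem_support.2 hr))]
        exact hgC r
    calc ∫⁻ r, g r ≤ ∫⁻ r, (closure (Function.support g)).indicator (fun _ => Cg) r :=
          lintegral_mono hsub
      _ = Cg * volume (closure (Function.support g)) :=
          lintegral_indicator_const isClosed_closure.measurableSet _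
      _ < ⊤ := ENNReal.mul_lt_top hCg.lt_top hgs.closure.measure_lt_top
  have hIg : ∫⁻ r, g r ≠ ⊤ := hIg'.ne
  have hIh' : ∫⁻ r, h r < ⊤ := by
    have hsub : ∀ r, h r ≤ (closure (Function.support h)).indicator (fun _ => Ch) r := by
      intro r
      by_cases hr : h r = 0
      · simp [hr]
      · rw [indicator_of_mem (subset_closure (Function.mem_support.2 hr))]
        exact hhC r
    calc ∫⁻ r, h r ≤ ∫⁻ r, (closure (Function.support h)).indicator (fun _ => Ch) r :=
          lintegral_mono hsub
      _ = Ch * volume (closure (Function.support h)) :=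
          lintegral_indicator_const isClosed_closure.measurableSet _
      _ < ⊤ := ENNReal.mul_lt_top hCh.lt_top hhs.closure.measure_lt_top
  have hIh : ∫⁻ r, h r ≠ ⊤ := hIh'.ne
  -- the constant c
  set c := Sg ^ (1 - t) * Sh ^ t with hcdef
  have hc0 : c ≠ 0 := by
    apply mul_ne_zero <;> simp [ENNReal.rpow_eq_zero_iff, hSg0, hSh0, hSgtop, hShtop]
  have hctop : c ≠ ⊤ := by
    apply ENNReal.mul_ne_top <;> exact ENNReal.rpow_ne_top_of_nonneg (by linarith) ‹_›
  -- superlevel sets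
  set X : ℝ → Set ℝ := fun u => {r | ENNReal.ofReal u * Sg < g r} with hXdef
  set Y : ℝ → Set ℝ := fun u => {r | ENNReal.ofReal u * Sh < h r} with hYdef
  set F : ℝ → Set ℝ := fun u => {r | ENNReal.ofReal u * c < f r} with hFdef
  have claim : ∀ u ∈ Ioo (0:ℝ) 1,
      ENNReal.ofReal (1 - t) * volume (X u) + ENNReal.ofReal t * volume (Y u)
        ≤ volume (F u) := by
    intro u hu
    have hofu0 : ENNReal.ofReal u ≠ 0 := (ENNReal.ofReal_pos.2 hu.1).ne'
    have hofu1 : ENNReal.ofReal u < 1 := ENNReal.ofReal_lt_one.2 hu.2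
    have hXne : (X u).Nonempty := by
      have hlt : ENNReal.ofReal u * Sg < Sg := by
        calc ENNReal.ofReal u * Sg < 1 * Sg := (ENNReal.mul_lt_mul_iff_left hSg0 hSgtop).2 hofu1
          _ = Sg := one_mul _
      obtain ⟨r, hr⟩ := lt_iSup_iff.mp hlt
      exact ⟨r, hr⟩
    have hYne : (Y u).Nonempty := by
      have hlt : ENNReal.ofReal u * Sh < Sh := by
        calc ENNReal.ofReal u * Sh < 1 * Sh := (ENNReal.mul_lt_mul_iff_left hSh0 hShtop).2 hofu1
          _ = Sh := one_mul _
      obtain ⟨r, hr⟩ := lt_iSup_iff.mp hlt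
      exact ⟨r, hr⟩
    have hXb : Bornology.IsBounded (X u) := hgs.subset (fun r hr => by
      have : (0:ℝ≥0∞) < g r := lt_of_le_of_lt (zero_le) hr
      exact Function.mem_support.2 this.ne')
    have hYb : Bornology.IsBounded (Y u) := hhs.subset (fun r hr => by
      have : (0:ℝ≥0∞) < h r := lt_of_le_of_lt (zero_le) hr
      exact Function.mem_support.2 this.ne')
    have h1 : (ENNReal.ofReal u * Sg) ^ (1 - t) * (ENNReal.ofReal u * Sh) ^ t
        = ENNReal.ofReal u * c := by
      rw [ENNReal.mul_rpow_of_ne_top ENNReal.ofReal_ne_top hSgtop,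
        ENNReal.mul_rpow_of_ne_top ENNReal.ofReal_ne_top hShtop,
        mul_mul_mul_comm, ← ENNReal.rpow_add _ _ hofu0 ENNReal.ofReal_ne_top,
        sub_add_cancel, ENNReal.rpow_one, hcdef]
    have hincl : (1 - t) • X u + t • Y u ⊆ F u := by
      rintro w ⟨x', ⟨x, hx, rfl⟩, y', ⟨y, hy, rfl⟩, rfl⟩
      show ENNReal.ofReal u * c < f ((1 - t) • x + t • y)
      have h2 : ENNReal.ofReal u * c < g x ^ (1 - t) * h y ^ t := by
        rw [← h1]
        exact ENNReal.mul_lt_mul (ENNReal.rpow_lt_rpow hx ht0') (ENNReal.rpow_lt_rpow hy ht0)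
      exact lt_of_lt_of_le h2 (by simpa [smul_eq_mul] using key x y)
    have hvol : volume ((1 - t) • X u) + volume (t • Y u) ≤ volume (F u) :=
      sumset1d ((hqg _).smul _) (hXne.smul_set) (hXb.smul₀ _)
        ((hqh _).smul _) (hYne.smul_set) (hYb.smul₀ _) hincl
    have e1 : volume ((1 - t) • X u) = ENNReal.ofReal (1 - t) * volume (X u) := by
      rw [Measure.addHaar_smul]
      congr 2
      rw [Module.finrank_self, pow_one, abs_of_pos ht0']
    have e2 : volume (t • Y u) = ENNReal.ofReal t * volume (Y u) := by
      rw [Measure.addHaar_smul]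
      congr 2
      rw [Module.finrank_self, pow_one, abs_of_pos ht0]
    rw [← e1, ← e2]
    exact hvol
  -- antitone level functions
  have antX : Antitone fun u => volume (X u) := fun u v huv => measure_mono
    (fun r hr => lt_of_le_of_lt (mul_le_mul_left (ENNReal.ofReal_le_ofReal huv) _) hr)
  have antY : Antitone fun u => volume (Y u) := fun u v huv => measure_mono
    (fun r hr => lt_of_le_of_lt (mul_le_mul_left (ENNReal.ofReal_le_ofReal huv) _) hr)
  have antF : Antitone fun u => volume (F u) := fun u v huv => measure_mono
    (fun r hr => lt_of_le_of_lt (mul_le_mul_left (ENNReal.ofReal_le_ofReal huv) _) hr)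
  -- split Ioi 0 into Ioo 0 1 and Ici 1
  have hsplit : ∀ φ : ℝ → ℝ≥0∞, (∀ u : ℝ, 1 ≤ u → φ u = 0) →
      ∫⁻ u in Ioi (0:ℝ), φ u = ∫⁻ u in Ioo (0:ℝ) 1, φ u := by
    intro φ hφ
    rw [← Ioo_union_Ici_eq_Ioi (zero_lt_one' ℝ),
      lintegral_union measurableSet_Ici (fun s hs1 hs2 => by
        rintro x hx
        exact absurd (hs2 hx) (not_le.2 (hs1 hx).2))]
    have : ∫⁻ u in Ici (1:ℝ), φ u = ∫⁻ u in Ici (1:ℝ), 0 :=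
      setLIntegral_congr_fun measurableSet_Ici
        (fun u hu => hφ u hu)
    rw [this, lintegral_zero, add_zero]
  have hXzero : ∀ u : ℝ, 1 ≤ u → volume (X u) = 0 := by
    intro u hu
    have : X u = ∅ := by
      ext r
      simp only [hXdef, mem_setOf_eq, mem_empty_iff_false, iff_false, not_lt]
      calc g r ≤ Sg := le_iSup g r
        _ = 1 * Sg := (one_mul _).symm
        _ ≤ ENNReal.ofReal u * Sg := mul_le_mul_left (ENNReal.one_le_ofReal.2 hu) _
    rw [this, measure_empty]
  have hYzero : ∀ u : ℝ, 1 ≤ u → volume (Y u) = 0 := by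
    intro u hu
    have : Y u = ∅ := by
      ext r
      simp only [hYdef, mem_setOf_eq, mem_empty_iff_false, iff_false, not_lt]
      calc h r ≤ Sh := le_iSup h r
        _ = 1 * Sh := (one_mul _).symm
        _ ≤ ENNReal.ofReal u * Sh := mul_le_mul_left (ENNReal.one_le_ofReal.2 hu) _
    rw [this, measure_empty]
  have hgInt : ∫⁻ u in Ioo (0:ℝ) 1, volume (X u) = Sg⁻¹ * ∫⁻ r, g r := by
    rw [← hsplit _ hXzero]
    exact layer_cake_scaled g hg hgfin hSg0 hSgtop
  have hhInt : ∫⁻ u in Ioo (0:ℝ) 1, volume (Y u) = Sh⁻¹ * ∫⁻ r, h r := by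
    rw [← hsplit _ hYzero]
    exact layer_cake_scaled h hh hhfin hSh0 hShtop
  have hfInt : ∫⁻ u in Ioo (0:ℝ) 1, volume (F u) ≤ c⁻¹ * ∫⁻ r, f r := by
    rw [← layer_cake_scaled f hf hffin hc0 hctop]
    exact lintegral_mono_set Ioo_subset_Ioi_self
  have step : ∫⁻ u in Ioo (0:ℝ) 1,
      (ENNReal.ofReal (1 - t) * volume (X u) + ENNReal.ofReal t * volume (Y u))
      ≤ ∫⁻ u in Ioo (0:ℝ) 1, volume (F u) :=
    setLIntegral_mono antF.measurable claim
  have expand : ∫⁻ u in Ioo (0:ℝ) 1,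
      (ENNReal.ofReal (1 - t) * volume (X u) + ENNReal.ofReal t * volume (Y u))
      = ENNReal.ofReal (1 - t) * (Sg⁻¹ * ∫⁻ r, g r)
        + ENNReal.ofReal t * (Sh⁻¹ * ∫⁻ r, h r) := by
    rw [lintegral_add_left (antX.measurable.const_mul _),
      lintegral_const_mul' _ _ ENNReal.ofReal_ne_top,
      lintegral_const_mul' _ _ ENNReal.ofReal_ne_top, hgInt, hhInt]
  set A := Sg⁻¹ * ∫⁻ r, g r with hAdef
  set B := Sh⁻¹ * ∫⁻ r, h r with hBdef
  have hAtop : A ≠ ⊤ := ENNReal.mul_ne_top (ENNReal.inv_ne_top.2 hSg0) hIg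
  have hBtop : B ≠ ⊤ := ENNReal.mul_ne_top (ENNReal.inv_ne_top.2 hSh0) hIh
  have final : A ^ (1 - t) * B ^ t ≤ c⁻¹ * ∫⁻ r, f r :=
    (ennreal_amgm hAtop hBtop ht0 ht1).trans ((expand ▸ step).trans hfInt)
  have hIg_eq : ∫⁻ r, g r = Sg * A := by
    rw [hAdef, ← mul_assoc, ENNReal.mul_inv_cancel hSg0 hSgtop, one_mul]
  have hIh_eq : ∫⁻ r, h r = Sh * B := by
    rw [hBdef, ← mul_assoc, ENNReal.mul_inv_cancel hSh0 hShtop, one_mul]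
  calc (∫⁻ r, g r) ^ (1 - t) * (∫⁻ r, h r) ^ t
      = (Sg * A) ^ (1 - t) * (Sh * B) ^ t := by rw [← hIg_eq, ← hIh_eq]
    _ = c * (A ^ (1 - t) * B ^ t) := by
        rw [ENNReal.mul_rpow_of_ne_top hSgtop hAtop,
          ENNReal.mul_rpow_of_ne_top hShtop hBtop, hcdef]
        ring
    _ ≤ c * (c⁻¹ * ∫⁻ r, f r) := mul_le_mul_right final _
    _ = ∫⁻ r, f r := by rw [← mul_assoc, ENNReal.mul_inv_cancel hc0 hctop, one_mul]


section prodstep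

variable {n : ℕ}

abbrev Vn (n : ℕ) := Fin n → ℝ

/-- slices of convex sets are convex -/
lemma slice_convex {A : Set (ℝ × Vn n)} (hA : Convex ℝ A) (r : ℝ) :
    Convex ℝ (Prod.mk r ⁻¹' A) := by
  intro v₀ h₀ v₁ h₁ a b ha hb hab
  have h2 := hA h₀ h₁ ha hb hab
  have h3 : a * r + b * r = r := by rw [← add_mul, hab, one_mul]
  simpa [Prod.smul_mk, Prod.mk_add_mk, h3] using h2

lemma slice_compact {A : Set (ℝ × Vn n)} (hA : IsCompact A) (r : ℝ) :
    IsCompact (Prod.mk r ⁻¹' A) := by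
  apply Metric.isCompact_of_isClosed_isBounded
  · exact hA.isClosed.preimage (Continuous.prodMk_right r)
  · apply (hA.image continuous_snd).isBounded.subset
    intro v hv
    exact ⟨(r, v), hv, rfl⟩

/-- key slice inclusion -/
lemma slice_comb {A B S : Set (ℝ × Vn n)} {s : ℝ} (hs0 : 0 ≤ s) (hs1 : s ≤ 1)
    (hsub : (1 - s) • A + s • B ⊆ S) (x y : ℝ) :
    (1 - s) • (Prod.mk x ⁻¹' A) + s • (Prod.mk y ⁻¹' B)
      ⊆ Prod.mk ((1 - s) * x + s * y) ⁻¹' S := by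
  rintro w ⟨v', ⟨v, hv, rfl⟩, u', ⟨u, hu, rfl⟩, rfl⟩
  have : (1 - s) • ((x, v) : ℝ × Vn n) + s • (y, u) ∈ S :=
    hsub (Set.add_mem_add ⟨(x,v), hv, rfl⟩ ⟨(y,u), hu, rfl⟩)
  simpa [Prod.smul_mk, Prod.mk_add_mk, smul_eq_mul] using this

lemma bm_pi : ∀ n : ℕ, ∀ t : ℝ, 0 < t → t < 1 →
    ∀ A B S : Set (Fin n → ℝ), Convex ℝ A → Convex ℝ B → IsCompact A → IsCompact B →
    MeasurableSet S → (1 - t) • A + t • B ⊆ S →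
    volume A ^ (1 - t) * volume B ^ t ≤ volume S := by
  intro n
  induction n with
  | zero =>
    intro t ht0 ht1 A B S hAc hBc hAk hBk hS hsub
    have ht0' : (0:ℝ) < 1 - t := by linarith
    rcases A.eq_empty_or_nonempty with rfl | ⟨a, ha⟩
    · simp [ENNReal.zero_rpow_of_pos ht0']
    rcases B.eq_empty_or_nonempty with rfl | ⟨b, hb⟩
    · simp [ENNReal.zero_rpow_of_pos ht0]
    have hSun : S = univ := by
      apply eq_univ_of_forall
      intro x
      have hmem : (1 - t) • a + t • b ∈ S :=
        hsub (Set.add_mem_add ⟨a, ha, rfl⟩ ⟨b, hb, rfl⟩)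
      rwa [Subsingleton.elim x ((1 - t) • a + t • b)]
    have h1 : volume (univ : Set (Fin 0 → ℝ)) = 1 := by
      rw [show (volume : Measure (Fin 0 → ℝ)) = Measure.pi fun _ => volume from rfl,
        Measure.pi_univ]
      simp
    rw [hSun, h1]
    have hA1 : volume A ≤ 1 := h1 ▸ measure_mono (subset_univ A)
    have hB1 : volume B ≤ 1 := h1 ▸ measure_mono (subset_univ B)
    exact mul_le_one' (ENNReal.rpow_le_one hA1 ht0'.le) (ENNReal.rpow_le_one hB1 ht0.le)
  | succ n ih =>
    intro t ht0 ht1 A₀ B₀ S₀ hAc₀ hBc₀ hAk₀ hBk₀ hS₀ hsub₀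
    have ht0' : (0:ℝ) < 1 - t := by linarith
    set e := MeasurableEquiv.piFinSuccAbove (fun _ : Fin (n+1) => ℝ) 0 with hedef
    have hmp : MeasurePreserving (⇑e) volume volume :=
      measurePreserving_piFinSuccAbove (fun _ => volume) 0
    have he_lin : ∀ (c : ℝ) (x y : Fin (n+1) → ℝ), e (c • x + y) = c • e x + e y :=
      fun c x y => rfl
    have he_smul : ∀ (c : ℝ) (x : Fin (n+1) → ℝ), e (c • x) = c • e x := fun c x => rfl
    have he_cont : Continuous (⇑e) :=
      Continuous.prodMk (continuous_apply _) (continuous_pi fun j => continuous_apply _)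
    set A : Set (ℝ × Vn n) := ⇑e '' A₀ with hAdef
    set B : Set (ℝ × Vn n) := ⇑e '' B₀ with hBdef
    set S' : Set (ℝ × Vn n) := ⇑e '' S₀ with hS'def
    have himg_vol : ∀ {C : Set (Fin (n+1) → ℝ)}, NullMeasurableSet C volume →
        volume (⇑e '' C) = volume C := by
      intro C hC
      rw [MeasurableEquiv.image_eq_preimage_symm]
      exact (hmp.symm e).measure_preimage hC
    have himg_conv : ∀ {C : Set (Fin (n+1) → ℝ)}, Convex ℝ C → Convex ℝ (⇑e '' C) := by
      intro C hC
      rintro _ ⟨x, hx, rfl⟩ _ ⟨y, hy, rfl⟩ a b ha hb hab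
      exact ⟨a • x + b • y, hC hx hy ha hb hab, by rw [he_lin a x (b • y), he_smul b y]⟩
    have hAk : IsCompact A := hAk₀.image he_cont
    have hBk : IsCompact B := hBk₀.image he_cont
    have hAc : Convex ℝ A := himg_conv hAc₀
    have hBc : Convex ℝ B := himg_conv hBc₀
    have hS'm : MeasurableSet S' := by
      rw [hS'def, MeasurableEquiv.image_eq_preimage_symm]
      exact e.symm.measurable hS₀
    have hsub' : (1 - t) • A + t • B ⊆ S' := by
      rintro _ ⟨_, ⟨_, ⟨x, hx, rfl⟩, rfl⟩, _, ⟨_, ⟨y, hy, rfl⟩, rfl⟩, rfl⟩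
      refine ⟨(1 - t) • x + t • y,
        hsub₀ (Set.add_mem_add ⟨x, hx, rfl⟩ ⟨y, hy, rfl⟩), ?_⟩
      rw [he_lin, he_smul]
    -- bound ball
    have hsmulA : IsCompact ((1 - t) • A) := by
      have := hAk.image (continuous_const_smul (1 - t))
      rwa [Set.image_smul] at this
    have hsmulB : IsCompact (t • B) := by
      have := hBk.image (continuous_const_smul t)
      rwa [Set.image_smul] at this
    obtain ⟨R, hR⟩ := (hsmulA.add hsmulB).isBounded.subset_closedBall 0
    set S'' : Set (ℝ × Vn n) := S' ∩ Metric.closedBall 0 R with hS''def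
    have hS''m : MeasurableSet S'' := hS'm.inter Metric.isClosed_closedBall.measurableSet
    have hsub'' : (1 - t) • A + t • B ⊆ S'' := subset_inter hsub' hR
    -- slice functions
    set f : ℝ → ℝ≥0∞ := fun r => volume (Prod.mk r ⁻¹' S'') with hfdef
    set g : ℝ → ℝ≥0∞ := fun r => volume (Prod.mk r ⁻¹' A) with hgdef
    set h : ℝ → ℝ≥0∞ := fun r => volume (Prod.mk r ⁻¹' B) with hhdef
    have hfm : Measurable f := measurable_measure_prodMk_left hS''m
    have hgm : Measurable g := measurable_measure_prodMk_left hAk.isClosed.measurableSet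
    have hhm : Measurable h := measurable_measure_prodMk_left hBk.isClosed.measurableSet
    -- bounds on slices
    have hball_slice : ∀ (r : ℝ) (ρ : ℝ) (U : Set (ℝ × Vn n)),
        U ⊆ Metric.closedBall 0 ρ → Prod.mk r ⁻¹' U ⊆ Metric.closedBall (0 : Vn n) ρ := by
      intro r ρ U hU v hv
      have h2 := hU hv
      rw [← closedBall_prod_same] at h2
      exact h2.2
    obtain ⟨RA, hRA⟩ := hAk.isBounded.subset_closedBall 0
    obtain ⟨RB, hRB⟩ := hBk.isBounded.subset_closedBall 0
    have hfC : ∀ r, f r ≤ volume (Metric.closedBall (0 : Vn n) R) :=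
      fun r => measure_mono (hball_slice r R S'' inter_subset_right)
    have hgC : ∀ r, g r ≤ volume (Metric.closedBall (0 : Vn n) RA) :=
      fun r => measure_mono (hball_slice r RA A hRA)
    have hhC : ∀ r, h r ≤ volume (Metric.closedBall (0 : Vn n) RB) :=
      fun r => measure_mono (hball_slice r RB B hRB)
    have hballfin : ∀ ρ : ℝ, volume (Metric.closedBall (0 : Vn n) ρ) ≠ ⊤ :=
      fun ρ => Metric.isBounded_closedBall.measure_lt_top.ne
    -- bounded supports
    have hsup : ∀ (U : Set (ℝ × Vn n)), IsCompact U →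
        Bornology.IsBounded (Function.support fun r => volume (Prod.mk r ⁻¹' U)) := by
      intro U hU
      apply (hU.image continuous_fst).isBounded.subset
      intro r hr
      rcases (Prod.mk r ⁻¹' U).eq_empty_or_nonempty with he | ⟨v, hv⟩
      · exact absurd (by simp [he]) hr
      · exact ⟨(r, v), hv, rfl⟩
    -- quasiconcavity of slice volumes via induction hypothesis
    have hql : ∀ (C : Set (ℝ × Vn n)), Convex ℝ C → IsCompact C →
        ∀ ℓ : ℝ≥0∞, Convex ℝ {r | ℓ < volume (Prod.mk r ⁻¹' C)} := by
      intro C hCc hCk ℓ r₀ h₀ r₁ h₁ a b ha hb hab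
      rcases eq_or_lt_of_le ha with rfl | ha'
      · simpa [show b = 1 by linarith] using h₁
      rcases eq_or_lt_of_le hb with rfl | hb'
      · simpa [show a = 1 by linarith] using h₀
      simp only [mem_setOf_eq] at h₀ h₁ ⊢
      have hb1 : b < 1 := by linarith
      have ha1b : a = 1 - b := by linarith
      have hCsub : (1 - b) • C + b • C ⊆ C := by
        rintro _ ⟨_, ⟨p, hp, rfl⟩, _, ⟨q, hq, rfl⟩, rfl⟩
        exact hCc hp hq (by linarith) hb (by ring)
      have hsl := slice_comb (by linarith : (0:ℝ) ≤ b) hb1.le hCsub r₀ r₁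
      have hM := ih b hb' hb1 (Prod.mk r₀ ⁻¹' C) (Prod.mk r₁ ⁻¹' C)
        (Prod.mk ((1 - b) * r₀ + b * r₁) ⁻¹' C)
        (slice_convex hCc r₀) (slice_convex hCc r₁)
        (slice_compact hCk r₀) (slice_compact hCk r₁)
        (hCk.isClosed.measurableSet.preimage measurable_prodMk_left) hsl
      set m := min (volume (Prod.mk r₀ ⁻¹' C)) (volume (Prod.mk r₁ ⁻¹' C)) with hmdef
      have hm : ℓ < m := lt_min h₀ h₁
      have hm0 : m ≠ 0 := (lt_of_le_of_lt (zero_le) hm).ne'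
      have hmtop : m ≠ ⊤ :=
        ((min_le_left _ _).trans_lt (slice_compact hCk r₀).measure_lt_top).ne
      have hchain : ℓ < volume (Prod.mk ((1 - b) * r₀ + b * r₁) ⁻¹' C) := by
        calc ℓ < m := hm
          _ = m ^ (1 - b) * m ^ b := by
              rw [← ENNReal.rpow_add _ _ hm0 hmtop, sub_add_cancel, ENNReal.rpow_one]
          _ ≤ (volume (Prod.mk r₀ ⁻¹' C)) ^ (1 - b) * (volume (Prod.mk r₁ ⁻¹' C)) ^ b :=
              mul_le_mul' (ENNReal.rpow_le_rpow (min_le_left _ _) (by linarith))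
                (ENNReal.rpow_le_rpow (min_le_right _ _) hb)
          _ ≤ _ := hM
      have harg : a • r₀ + b • r₁ = (1 - b) * r₀ + b * r₁ := by
        rw [ha1b]; simp [smul_eq_mul]
      rwa [harg]
    -- key hypothesis
    have hkey : ∀ x y : ℝ, g x ^ (1 - t) * h y ^ t ≤ f ((1 - t) * x + t * y) := by
      intro x y
      exact ih t ht0 ht1 (Prod.mk x ⁻¹' A) (Prod.mk y ⁻¹' B) _
        (slice_convex hAc x) (slice_convex hBc y)
        (slice_compact hAk x) (slice_compact hBk y)
        (hS''m.preimage measurable_prodMk_left)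
        (slice_comb ht0.le ht1.le hsub'' x y)
    have main := pl_dim1 ht0 ht1 f g h _ _ _ hfm hgm hhm
      hfC (hballfin R) hgC (hballfin RA) hhC (hballfin RB)
      (hsup A hAk) (hsup B hBk) (hql A hAc hAk) (hql B hBc hBk) hkey
    -- Fubini
    have fub : ∀ (U : Set (ℝ × Vn n)), MeasurableSet U →
        volume U = ∫⁻ r, volume (Prod.mk r ⁻¹' U) := by
      intro U hU
      rw [show (volume : Measure (ℝ × Vn n)) = (volume : Measure ℝ).prod volume from rfl,
        Measure.prod_apply hU]
    calc volume A₀ ^ (1 - t) * volume B₀ ^ t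
        = volume A ^ (1 - t) * volume B ^ t := by
          rw [himg_vol hAk₀.isClosed.measurableSet.nullMeasurableSet,
            himg_vol hBk₀.isClosed.measurableSet.nullMeasurableSet]
      _ = (∫⁻ r, g r) ^ (1 - t) * (∫⁻ r, h r) ^ t := by
          rw [← fub A hAk.isClosed.measurableSet, ← fub B hBk.isClosed.measurableSet]
      _ ≤ ∫⁻ r, f r := main
      _ = volume S'' := (fub S'' hS''m).symm
      _ ≤ volume S' := measure_mono inter_subset_left
      _ = volume S₀ := himg_vol hS₀.nullMeasurableSet


lemma bm_euc (n : ℕ) {t : ℝ} (ht0 : 0 < t) (ht1 : t < 1)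
    {A B S : Set (EuclideanSpace ℝ (Fin n))} (hAc : Convex ℝ A) (hBc : Convex ℝ B)
    (hAk : IsCompact A) (hBk : IsCompact B) (hS : MeasurableSet S)
    (hsub : (1 - t) • A + t • B ⊆ S) :
    volume A ^ (1 - t) * volume B ^ t ≤ volume S := by
  set ε := (MeasurableEquiv.toLp 2 (Fin n → ℝ)).symm with hεdef
  set L := PiLp.continuousLinearEquiv 2 ℝ (fun _ : Fin n => ℝ) with hLdef
  have hmp : MeasurePreserving (⇑ε) volume volume :=
    EuclideanSpace.volume_preserving_symm_measurableEquiv_toLp (Fin n)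
  have hcoe : ⇑ε = ⇑L := rfl
  have himg_vol : ∀ {C : Set (EuclideanSpace ℝ (Fin n))}, NullMeasurableSet C volume →
      volume (⇑ε '' C) = volume C := by
    intro C hC
    rw [MeasurableEquiv.image_eq_preimage_symm]
    exact (hmp.symm ε).measure_preimage hC
  have he_lin : ∀ (c : ℝ) (x y : EuclideanSpace ℝ (Fin n)),
      ε (c • x + y) = c • ε x + ε y := fun c x y => rfl
  have he_smul : ∀ (c : ℝ) (x : EuclideanSpace ℝ (Fin n)), ε (c • x) = c • ε x :=
    fun c x => rfl
  have himg_conv : ∀ {C : Set (EuclideanSpace ℝ (Fin n))}, Convex ℝ C →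
      Convex ℝ (⇑ε '' C) := by
    intro C hC
    rintro _ ⟨x, hx, rfl⟩ _ ⟨y, hy, rfl⟩ a b ha hb hab
    exact ⟨a • x + b • y, hC hx hy ha hb hab, by rw [he_lin a x (b • y), he_smul b y]⟩
  have hsub' : (1 - t) • (⇑ε '' A) + t • (⇑ε '' B) ⊆ ⇑ε '' S := by
    rintro _ ⟨_, ⟨_, ⟨x, hx, rfl⟩, rfl⟩, _, ⟨_, ⟨y, hy, rfl⟩, rfl⟩, rfl⟩
    refine ⟨(1 - t) • x + t • y,
      hsub (Set.add_mem_add ⟨x, hx, rfl⟩ ⟨y, hy, rfl⟩), ?_⟩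
    rw [he_lin, he_smul]
  have hSm' : MeasurableSet (⇑ε '' S) := by
    rw [MeasurableEquiv.image_eq_preimage_symm]
    exact ε.symm.measurable hS
  have := bm_pi n t ht0 ht1 (⇑ε '' A) (⇑ε '' B) (⇑ε '' S)
    (himg_conv hAc) (himg_conv hBc)
    (by rw [hcoe]; exact hAk.image L.continuous)
    (by rw [hcoe]; exact hBk.image L.continuous)
    hSm' hsub'
  rwa [himg_vol hAk.isClosed.measurableSet.nullMeasurableSet,
    himg_vol hBk.isClosed.measurableSet.nullMeasurableSet,
    himg_vol hS.nullMeasurableSet] at this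

lemma bm_closed (n : ℕ) {t : ℝ} (ht0 : 0 < t) (ht1 : t < 1)
    {A B S : Set (EuclideanSpace ℝ (Fin n))} (hAc : Convex ℝ A) (hBc : Convex ℝ B)
    (hAcl : IsClosed A) (hBcl : IsClosed B)
    (hAfin : volume A ≠ ⊤) (hBfin : volume B ≠ ⊤)
    (hS : MeasurableSet S) (hsub : (1 - t) • A + t • B ⊆ S) :
    volume A ^ (1 - t) * volume B ^ t ≤ volume S := by
  have ht0' : (0:ℝ) < 1 - t := by linarith
  set Ak : ℕ → Set (EuclideanSpace ℝ (Fin n)) := fun k => A ∩ Metric.closedBall 0 k with hAkdef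
  set Bk : ℕ → Set (EuclideanSpace ℝ (Fin n)) := fun k => B ∩ Metric.closedBall 0 k with hBkdef
  have hAkc : ∀ k, IsCompact (Ak k) := fun k =>
    Metric.isCompact_of_isClosed_isBounded (hAcl.inter Metric.isClosed_closedBall)
      (Metric.isBounded_closedBall.subset inter_subset_right)
  have hBkc : ∀ k, IsCompact (Bk k) := fun k =>
    Metric.isCompact_of_isClosed_isBounded (hBcl.inter Metric.isClosed_closedBall)
      (Metric.isBounded_closedBall.subset inter_subset_right)
  have hstep : ∀ k, volume (Ak k) ^ (1 - t) * volume (Bk k) ^ t ≤ volume S := by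
    intro k
    apply bm_euc n ht0 ht1 (hAc.inter (convex_closedBall _ _)) (hBc.inter (convex_closedBall _ _))
      (hAkc k) (hBkc k) hS
    exact subset_trans (Set.add_subset_add (Set.smul_set_mono inter_subset_left)
      (Set.smul_set_mono inter_subset_left)) hsub
  -- limits
  have hAU : ⋃ k, Ak k = A := by
    rw [hAkdef, ← inter_iUnion]
    rw [Metric.iUnion_closedBall_nat, inter_univ]
  have hBU : ⋃ k, Bk k = B := by
    rw [hBkdef, ← inter_iUnion]
    rw [Metric.iUnion_closedBall_nat, inter_univ]
  have hmonoA : Monotone Ak := fun i j hij =>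
    inter_subset_inter_right _ (Metric.closedBall_subset_closedBall (Nat.cast_le.2 hij))
  have hmonoB : Monotone Bk := fun i j hij =>
    inter_subset_inter_right _ (Metric.closedBall_subset_closedBall (Nat.cast_le.2 hij))
  have htA : Filter.Tendsto (fun k => volume (Ak k)) Filter.atTop (nhds (volume A)) := by
    have := tendsto_measure_iUnion_atTop (μ := volume) hmonoA
    rwa [hAU] at this
  have htB : Filter.Tendsto (fun k => volume (Bk k)) Filter.atTop (nhds (volume B)) := by
    have := tendsto_measure_iUnion_atTop (μ := volume) hmonoB
    rwa [hBU] at this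
  have htA' : Filter.Tendsto (fun k => volume (Ak k) ^ (1 - t)) Filter.atTop
      (nhds (volume A ^ (1 - t))) :=
    (ENNReal.continuous_rpow_const.tendsto _).comp htA
  have htB' : Filter.Tendsto (fun k => volume (Bk k) ^ t) Filter.atTop
      (nhds (volume B ^ t)) :=
    (ENNReal.continuous_rpow_const.tendsto _).comp htB
  have hmul : Filter.Tendsto (fun k => volume (Ak k) ^ (1 - t) * volume (Bk k) ^ t)
      Filter.atTop (nhds (volume A ^ (1 - t) * volume B ^ t)) := by
    apply ENNReal.Tendsto.mul htA' ?_ htB' ?_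
    · right
      exact ENNReal.rpow_ne_top_of_nonneg ht0.le hBfin
    · right
      exact ENNReal.rpow_ne_top_of_nonneg ht0'.le hAfin
  exact le_of_tendsto hmul (Filter.Eventually.of_forall hstep)

lemma root_pow {n : ℕ} (hn : (n:ℝ) ≠ 0) {x : ℝ} (hx : 0 ≤ x) :
    (x ^ (1 / (n:ℝ))) ^ (n:ℕ) = x := by
  rw [← Real.rpow_natCast (x ^ (1 / (n:ℝ))) n, ← Real.rpow_mul hx,
    one_div_mul_cancel hn, Real.rpow_one]

lemma pow_root {n : ℕ} (hn : (n:ℝ) ≠ 0) {x : ℝ} (hx : 0 ≤ x) :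
    (x ^ (n:ℕ)) ^ (1 / (n:ℝ)) = x := by
  rw [← Real.rpow_natCast x n, ← Real.rpow_mul hx, mul_one_div_cancel hn, Real.rpow_one]

lemma scale_vol {n : ℕ} (c : ℝ) (U : Set (EuclideanSpace ℝ (Fin n))) :
    volume (c • U) = ENNReal.ofReal (|c| ^ n) * volume U := by
  rw [Measure.addHaar_smul, finrank_euclideanSpace_fin, abs_pow]

lemma bm_additive (n : ℕ) (hn : 0 < n) {t : ℝ} (ht0 : 0 < t) (ht1 : t < 1)
    {A B C : Set (EuclideanSpace ℝ (Fin n))}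
    (hAc : Convex ℝ A) (hBc : Convex ℝ B)
    (hAcl : IsClosed A) (hBcl : IsClosed B)
    (hAne : A.Nonempty) (hBne : B.Nonempty)
    (hAfin : volume A ≠ ⊤) (hBfin : volume B ≠ ⊤)
    (hCcl : IsClosed C) (hCfin : volume C ≠ ⊤)
    (hsub : (1 - t) • A + t • B ⊆ C) :
    (1 - t) * (volume A).toReal ^ (1 / (n:ℝ)) + t * (volume B).toReal ^ (1 / (n:ℝ))
      ≤ (volume C).toReal ^ (1 / (n:ℝ)) := by
  have hn' : (n:ℝ) ≠ 0 := Nat.cast_ne_zero.2 hn.ne'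
  have h1n : 0 < 1 / (n:ℝ) := by positivity
  have ht0' : (0:ℝ) < 1 - t := by linarith
  rcases eq_or_ne (volume A) 0 with hA0 | hA0
  · obtain ⟨a₀, ha₀⟩ := hAne
    have hsub2 : ((1 - t) • a₀) +ᵥ (t • B) ⊆ C := by
      rintro _ ⟨y, hy, rfl⟩
      exact hsub (Set.add_mem_add ⟨a₀, ha₀, rfl⟩ hy)
    have hvol : ENNReal.ofReal (t ^ n) * volume B ≤ volume C := by
      calc ENNReal.ofReal (t ^ n) * volume B = volume (t • B) := by
            rw [scale_vol, abs_of_pos ht0]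
        _ = volume (((1 - t) • a₀) +ᵥ (t • B)) := by rw [measure_vadd]
        _ ≤ volume C := measure_mono hsub2
    have h2 : t ^ n * (volume B).toReal ≤ (volume C).toReal := by
      have h3 := ENNReal.toReal_mono hCfin hvol
      rwa [ENNReal.toReal_mul, ENNReal.toReal_ofReal (by positivity)] at h3
    rw [hA0]
    simp only [ENNReal.toReal_zero, Real.zero_rpow (ne_of_gt h1n), mul_zero, zero_add]
    calc t * (volume B).toReal ^ (1 / (n:ℝ))
        = (t ^ (n:ℕ) * (volume B).toReal) ^ (1 / (n:ℝ)) := by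
          rw [Real.mul_rpow (by positivity) ENNReal.toReal_nonneg, pow_root hn' ht0.le]
      _ ≤ (volume C).toReal ^ (1 / (n:ℝ)) :=
          Real.rpow_le_rpow (by positivity) h2 h1n.le
  rcases eq_or_ne (volume B) 0 with hB0 | hB0
  · obtain ⟨b₀, hb₀⟩ := hBne
    have hsub2 : (t • b₀) +ᵥ ((1 - t) • A) ⊆ C := by
      rintro _ ⟨y, hy, rfl⟩
      have : y + t • b₀ ∈ C := hsub (Set.add_mem_add hy ⟨b₀, hb₀, rfl⟩)
      simpa [add_comm] using this
    have hvol : ENNReal.ofReal ((1 - t) ^ n) * volume A ≤ volume C := by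
      calc ENNReal.ofReal ((1 - t) ^ n) * volume A = volume ((1 - t) • A) := by
            rw [scale_vol, abs_of_pos ht0']
        _ = volume ((t • b₀) +ᵥ ((1 - t) • A)) := by rw [measure_vadd]
        _ ≤ volume C := measure_mono hsub2
    have h2 : (1 - t) ^ n * (volume A).toReal ≤ (volume C).toReal := by
      have h3 := ENNReal.toReal_mono hCfin hvol
      rwa [ENNReal.toReal_mul, ENNReal.toReal_ofReal (by positivity)] at h3
    rw [hB0]
    simp only [ENNReal.toReal_zero, Real.zero_rpow (ne_of_gt h1n), mul_zero, add_zero]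
    calc (1 - t) * (volume A).toReal ^ (1 / (n:ℝ))
        = ((1 - t) ^ (n:ℕ) * (volume A).toReal) ^ (1 / (n:ℝ)) := by
          rw [Real.mul_rpow (by positivity) ENNReal.toReal_nonneg, pow_root hn' ht0'.le]
      _ ≤ (volume C).toReal ^ (1 / (n:ℝ)) :=
          Real.rpow_le_rpow (by positivity) h2 h1n.le
  -- main case
  set α := (volume A).toReal with hα
  set β := (volume B).toReal with hβ
  have hαpos : 0 < α := ENNReal.toReal_pos hA0 hAfin
  have hβpos : 0 < β := ENNReal.toReal_pos hB0 hBfin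
  set p := α ^ (1 / (n:ℝ)) with hp
  set q := β ^ (1 / (n:ℝ)) with hq
  have hppos : 0 < p := Real.rpow_pos_of_pos hαpos _
  have hqpos : 0 < q := Real.rpow_pos_of_pos hβpos _
  set m := (1 - t) * p + t * q with hm
  have hmpos : 0 < m := by positivity
  set s := t * q / m with hs
  have hs0 : 0 < s := by positivity
  have hs1 : s < 1 := by
    rw [hs, div_lt_one hmpos, hm]
    nlinarith
  have hcoef1 : (1 - s) * p⁻¹ = m⁻¹ * (1 - t) := by
    rw [hs, hm]
    have h1 : (1 - t) * p + t * q ≠ 0 := by rw [← hm]; exact hmpos.ne'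
    field_simp
    ring
  have hcoef2 : s * q⁻¹ = m⁻¹ * t := by
    rw [hs]
    field_simp
  have hvolA' : volume (p⁻¹ • A) = 1 := by
    rw [scale_vol, abs_of_pos (inv_pos.2 hppos), inv_pow, hp, root_pow hn' hαpos.le,
      ← ENNReal.ofReal_toReal hAfin, ← ENNReal.ofReal_mul (by positivity), ← hα,
      inv_mul_cancel₀ hαpos.ne', ENNReal.ofReal_one]
  have hvolB' : volume (q⁻¹ • B) = 1 := by
    rw [scale_vol, abs_of_pos (inv_pos.2 hqpos), inv_pow, hq, root_pow hn' hβpos.le,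
      ← ENNReal.ofReal_toReal hBfin, ← ENNReal.ofReal_mul (by positivity), ← hβ,
      inv_mul_cancel₀ hβpos.ne', ENNReal.ofReal_one]
  have hsub' : (1 - s) • (p⁻¹ • A) + s • (q⁻¹ • B) ⊆ m⁻¹ • C := by
    rintro _ ⟨_, ⟨_, ⟨x, hx, rfl⟩, rfl⟩, _, ⟨_, ⟨y, hy, rfl⟩, rfl⟩, rfl⟩
    have hid : (1 - s) • (p⁻¹ • x) + s • (q⁻¹ • y) = m⁻¹ • ((1 - t) • x + t • y) := by
      rw [smul_smul, smul_smul, smul_add, smul_smul, smul_smul, hcoef1, hcoef2]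
    exact ⟨(1 - t) • x + t • y, hsub (Set.add_mem_add ⟨x, hx, rfl⟩ ⟨y, hy, rfl⟩), hid.symm⟩
  have hbm := bm_closed n hs0 hs1 (hAc.smul _) (hBc.smul _)
    (hAcl.smul_of_ne_zero (inv_ne_zero hppos.ne')) (hBcl.smul_of_ne_zero (inv_ne_zero hqpos.ne'))
    (by rw [hvolA']; exact ENNReal.one_ne_top) (by rw [hvolB']; exact ENNReal.one_ne_top)
    (hCcl.smul_of_ne_zero (inv_ne_zero hmpos.ne')).measurableSet hsub'
  rw [hvolA', hvolB', ENNReal.one_rpow, ENNReal.one_rpow, one_mul] at hbm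
  -- extract: 1 ≤ (m^n)⁻¹ * (volume C).toReal
  have hCscale : volume (m⁻¹ • C) = ENNReal.ofReal ((m ^ n)⁻¹) * volume C := by
    rw [scale_vol, abs_of_pos (inv_pos.2 hmpos), inv_pow]
  have h2 : (1:ℝ) ≤ (m ^ n)⁻¹ * (volume C).toReal := by
    have h3 := ENNReal.toReal_mono (by
      rw [hCscale]
      exact ENNReal.mul_ne_top ENNReal.ofReal_ne_top hCfin) hbm
    rwa [hCscale, ENNReal.toReal_mul, ENNReal.toReal_ofReal (by positivity),
      ENNReal.toReal_one] at h3
  have h4 : m ^ n ≤ (volume C).toReal := by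
    have hmn : (0:ℝ) < m ^ n := pow_pos hmpos n
    rwa [inv_mul_eq_div, one_le_div hmn] at h2
  calc (1 - t) * α ^ (1 / (n:ℝ)) + t * β ^ (1 / (n:ℝ)) = m := rfl
    _ = (m ^ (n:ℕ)) ^ (1 / (n:ℝ)) := (pow_root hn' hmpos.le).symm
    _ ≤ (volume C).toReal ^ (1 / (n:ℝ)) :=
        Real.rpow_le_rpow (by positivity) h4 h1n.le


variable {n : ℕ}

lemma ray_mem {E : Type*} [NormedAddCommGroup E] [NormedSpace ℝ E]
    {C : Set E} (hCc : Convex ℝ C) (hCcl : IsClosed C) {p₀ d : E}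
    (hray : ∀ s : ℝ, 0 ≤ s → p₀ + s • d ∈ C) {x : E} (hx : x ∈ C) :
    ∀ s : ℝ, 0 ≤ s → x + s • d ∈ C := by
  intro s hs
  have hmem : ∀ k : ℕ, x + s • d + (1 / (k + 1 : ℝ)) • (p₀ - x) ∈ C := by
    intro k
    have hk : (0:ℝ) < k + 1 := by positivity
    have hε0 : (0:ℝ) ≤ 1 / (k + 1 : ℝ) := by positivity
    have hε1 : (1:ℝ) / (k + 1 : ℝ) ≤ 1 := by
      rw [div_le_one hk]; linarith
    have h2 := hCc hx (hray ((k + 1) * s) (by positivity))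
      (by linarith : (0:ℝ) ≤ 1 - 1 / (k + 1 : ℝ)) hε0 (by ring)
    have he : (1 - 1 / (k + 1 : ℝ)) • x + (1 / (k + 1 : ℝ)) • (p₀ + ((k + 1 : ℝ) * s) • d)
        = x + s • d + (1 / (k + 1 : ℝ)) • (p₀ - x) := by
      have hne : (k + 1 : ℝ) ≠ 0 := hk.ne'
      rw [smul_add, smul_smul, sub_smul, smul_sub, one_smul]
      have : 1 / (k + 1 : ℝ) * ((k + 1 : ℝ) * s) = s := by field_simp
      rw [this]
      abel
    rw [← he]
    exact h2
  have hlim : Filter.Tendsto (fun k : ℕ => x + s • d + (1 / (k + 1 : ℝ)) • (p₀ - x))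
      Filter.atTop (nhds (x + s • d)) := by
    have h1 : Filter.Tendsto (fun k : ℕ => (1 / (k + 1 : ℝ)) • (p₀ - x))
        Filter.atTop (nhds 0) := by
      have := (tendsto_one_div_add_atTop_nhds_zero_nat (𝕜 := ℝ)).smul_const (p₀ - x)
      rwa [zero_smul] at this
    have := h1.const_add (x + s • d)
    rwa [add_zero] at this
  exact hCcl.mem_of_tendsto hlim (Filter.Eventually.of_forall hmem)

lemma exists_recession {C : Set (EuclideanSpace ℝ (Fin n))}
    (hCc : Convex ℝ C) (hCcl : IsClosed C) (hCne : C.Nonempty)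
    (hCub : ¬ Bornology.IsBounded C) :
    ∃ d : EuclideanSpace ℝ (Fin n), ‖d‖ = 1 ∧ ∀ x ∈ C, ∀ s : ℝ, 0 ≤ s → x + s • d ∈ C := by
  obtain ⟨p₀, hp₀⟩ := hCne
  -- unbounded: find far points
  have hfar : ∀ k : ℕ, ∃ u ∈ C, (k : ℝ) + ‖p₀‖ + 1 < ‖u‖ := by
    intro k
    rw [isBounded_iff_forall_norm_le] at hCub
    push_neg at hCub
    obtain ⟨u, hu, hnorm⟩ := hCub ((k : ℝ) + ‖p₀‖ + 1)
    exact ⟨u, hu, hnorm⟩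
  choose u hu hunorm using hfar
  have hR : ∀ k : ℕ, (k : ℝ) + 1 ≤ ‖u k - p₀‖ := by
    intro k
    have := norm_sub_norm_le (u k) p₀
    have h2 := hunorm k
    linarith [norm_sub_norm_le (u k) p₀]
  have hRpos : ∀ k : ℕ, (0:ℝ) < ‖u k - p₀‖ := fun k => lt_of_lt_of_le (by positivity) (hR k)
  set dseq : ℕ → EuclideanSpace ℝ (Fin n) := fun k => ‖u k - p₀‖⁻¹ • (u k - p₀) with hdseq
  have hdmem : ∀ k, dseq k ∈ Metric.sphere (0 : EuclideanSpace ℝ (Fin n)) 1 := by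
    intro k
    simp only [mem_sphere_iff_norm, sub_zero, hdseq, norm_smul, norm_inv, norm_norm]
    rw [inv_mul_cancel₀ (hRpos k).ne']
  obtain ⟨d, hd, φ, hφ, hdlim⟩ := (isCompact_sphere (0 : EuclideanSpace ℝ (Fin n)) 1).tendsto_subseq hdmem
  refine ⟨d, by simpa using hd, ?_⟩
  have hbase : ∀ s : ℝ, 0 ≤ s → p₀ + s • d ∈ C := by
    intro s hs
    have hmem : ∀ k : ℕ, s ≤ (k:ℝ) + 1 → p₀ + s • dseq k ∈ C := by
      intro k hk
      have hRk := hRpos k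
      have hsR : s / ‖u k - p₀‖ ≤ 1 := by
        rw [div_le_one hRk]
        exact hk.trans (hR k)
      have h2 := hCc hp₀ (hu k) (by
        have : 0 ≤ s / ‖u k - p₀‖ := by positivity
        linarith : (0:ℝ) ≤ 1 - s / ‖u k - p₀‖) (by positivity : (0:ℝ) ≤ s / ‖u k - p₀‖) (by ring)
      have he : (1 - s / ‖u k - p₀‖) • p₀ + (s / ‖u k - p₀‖) • u k = p₀ + s • dseq k := by
        rw [hdseq, smul_smul, sub_smul, one_smul]
        have : s * ‖u k - p₀‖⁻¹ = s / ‖u k - p₀‖ := by rw [div_eq_mul_inv]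
        rw [this, smul_sub]
        abel
      rw [← he]
      exact h2
    have hmem' : ∀ᶠ k : ℕ in Filter.atTop, p₀ + s • dseq (φ k) ∈ C := by
      filter_upwards [Filter.eventually_ge_atTop ⌈s⌉₊] with k hk
      apply hmem (φ k)
      have h1 : s ≤ (k:ℝ) := (Nat.le_ceil s).trans (Nat.cast_le.2 hk)
      have h2 : (k:ℝ) ≤ (φ k : ℝ) := Nat.cast_le.2 hφ.le_apply
      linarith
    have hlim2 : Filter.Tendsto (fun k => p₀ + s • dseq (φ k)) Filter.atTop
        (nhds (p₀ + s • d)) :=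
      ((hdlim.const_smul s).const_add p₀)
    exact hCcl.mem_of_tendsto hlim2 hmem'
  intro x hx s hs
  exact ray_mem hCc hCcl hbase hx s hs

lemma ball_of_pos_vol {A : Set (EuclideanSpace ℝ (Fin n))}
    (hAc : Convex ℝ A) (hAcl : IsClosed A) (hpos : 0 < volume A) :
    ∃ c r, 0 < r ∧ Metric.ball c r ⊆ A := by
  rcases eq_empty_or_nonempty (interior A) with hint | ⟨c, hc⟩
  · exfalso
    have hfr : frontier A = A := by
      rw [frontier, hint, closure_eq_iff_isClosed.2 hAcl, diff_empty]
    have := hAc.addHaar_frontier volume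
    rw [hfr] at this
    exact hpos.ne' this
  · obtain ⟨r, hr, hball⟩ := Metric.isOpen_iff.1 isOpen_interior c hc
    exact ⟨c, r, hr, hball.trans interior_subset⟩

lemma vol_top_of_ray {A : Set (EuclideanSpace ℝ (Fin n))}
    {c d : EuclideanSpace ℝ (Fin n)} {r : ℝ} (hr : 0 < r) (hd : ‖d‖ = 1)
    (hball : Metric.ball c r ⊆ A)
    (hray : ∀ x ∈ A, ∀ s : ℝ, 0 ≤ s → x + s • d ∈ A) :
    volume A = ⊤ := by
  set Bk : ℕ → Set (EuclideanSpace ℝ (Fin n)) := fun k => Metric.ball (c + (3 * r * k) • d) r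
    with hBk
  have hsub : ∀ k, Bk k ⊆ A := by
    intro k y hy
    have h1 : y - (3 * r * k) • d ∈ Metric.ball c r := by
      rw [Metric.mem_ball] at hy ⊢
      rw [dist_eq_norm] at hy ⊢
      have : y - (3 * r * k) • d - c = y - (c + (3 * r * k) • d) := by abel
      rw [this]
      exact hy
    have h2 := hray _ (hball h1) (3 * r * k) (by positivity)
    have h3 : y - (3 * r * k) • d + (3 * r * k) • d = y := by abel
    rwa [h3] at h2
  have hdisj : Pairwise (Function.onFun Disjoint Bk) := by
    intro j k hjk
    apply Metric.ball_disjoint_ball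
    rw [dist_eq_norm]
    have : c + (3 * r * j) • d - (c + (3 * r * k) • d) = ((3 * r * j : ℝ) - 3 * r * k) • d := by
      rw [sub_smul]; abel
    rw [this, norm_smul, hd, mul_one, Real.norm_eq_abs]
    have hjk' : (1:ℝ) ≤ |(j:ℝ) - (k:ℝ)| := by
      rcases lt_or_gt_of_ne hjk with h | h
      · rw [abs_sub_comm, abs_of_pos (sub_pos.2 (Nat.cast_lt.2 h))]
        have : (j:ℝ) + 1 ≤ k := by exact_mod_cast Nat.succ_le_of_lt h
        linarith
      · rw [abs_of_pos (sub_pos.2 (Nat.cast_lt.2 h))]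
        have : (k:ℝ) + 1 ≤ j := by exact_mod_cast Nat.succ_le_of_lt h
        linarith
    have h4 : (3 * r * j : ℝ) - 3 * r * k = 3 * r * ((j:ℝ) - k) := by ring
    rw [h4, abs_mul, abs_of_pos (by positivity : (0:ℝ) < 3 * r)]
    nlinarith
  have hvol : volume (⋃ k, Bk k) = ∑' k : ℕ, volume (Bk k) :=
    measure_iUnion hdisj fun k => Metric.isOpen_ball.measurableSet
  have hconst : ∀ k, volume (Bk k) = volume (Metric.ball (0 : EuclideanSpace ℝ (Fin n)) r) :=
    fun k => Measure.addHaar_ball_center volume _ r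
  have hbp : volume (Metric.ball (0 : EuclideanSpace ℝ (Fin n)) r) ≠ 0 :=
    (Metric.measure_ball_pos volume 0 hr).ne'
  have htop : volume (⋃ k, Bk k) = ⊤ := by
    rw [hvol]
    simp_rw [hconst]
    exact ENNReal.tsum_const_eq_top_of_ne_zero hbp
  have hmm : volume (⋃ k, Bk k) ≤ volume A := measure_mono (iUnion_subset hsub)
  rw [htop] at hmm
  exact top_le_iff.1 hmm

lemma vol_inter_fin {K L : Set (EuclideanSpace ℝ (Fin n))}
    (hKclosed : IsClosed K) (hKconv : Convex ℝ K)
    (hLclosed : IsClosed L) (hLconv : Convex ℝ L)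
    {a : EuclideanSpace ℝ (Fin n)}
    (hpos : 0 < volume (K ∩ (a +ᵥ L)))
    (hfin : volume (K ∩ (a +ᵥ L)) < ⊤) :
    ∀ x : EuclideanSpace ℝ (Fin n), volume (K ∩ (x +ᵥ L)) ≠ ⊤ := by
  intro x htop
  set B := K ∩ (x +ᵥ L) with hB
  have hBne : B.Nonempty := by
    rcases eq_empty_or_nonempty B with hemp | hne
    · rw [hemp] at htop; simp at htop
    · exact hne
  have hBcl : IsClosed B := hKclosed.inter (hLclosed.vadd x : IsClosed (x +ᵥ L))
  have hBc : Convex ℝ B := hKconv.inter (hLconv.vadd x : Convex ℝ (x +ᵥ L))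
  have hBub : ¬ Bornology.IsBounded B := by
    intro hb
    exact (hb.measure_lt_top).ne htop
  obtain ⟨d, hd, hray⟩ := exists_recession hBc hBcl hBne hBub
  obtain ⟨p₀, hp₀⟩ := hBne
  -- A := K ∩ (a +ᵥ L) absorbs the ray direction
  set A := K ∩ (a +ᵥ L) with hA
  have hAc : Convex ℝ A := hKconv.inter (hLconv.vadd a : Convex ℝ (a +ᵥ L))
  have hAcl : IsClosed A := hKclosed.inter (hLclosed.vadd a : IsClosed (a +ᵥ L))
  have hrayA : ∀ y ∈ A, ∀ s : ℝ, 0 ≤ s → y + s • d ∈ A := by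
    intro y hy s hs
    constructor
    · -- in K
      have hbaseK : ∀ s : ℝ, 0 ≤ s → p₀ + s • d ∈ K := fun s hs => (hray p₀ hp₀ s hs).1
      exact ray_mem hKconv hKclosed hbaseK hy.1 s hs
    · -- in a +ᵥ L
      have hbaseL : ∀ s : ℝ, 0 ≤ s → (a + (p₀ - x)) + s • d ∈ a +ᵥ L := by
        intro s hs
        have h1 : p₀ + s • d ∈ x +ᵥ L := (hray p₀ hp₀ s hs).2
        rw [mem_vadd_set_iff_neg_vadd_mem] at h1 ⊢
        have : -a +ᵥ (a + (p₀ - x) + s • d) = -x +ᵥ (p₀ + s • d) := by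
          simp only [vadd_eq_add]
          abel
        rw [this]
        exact h1
      exact ray_mem (hLconv.vadd a : Convex ℝ (a +ᵥ L)) (hLclosed.vadd a : IsClosed (a +ᵥ L)) hbaseL hy.2 s hs
  obtain ⟨c, r, hr, hball⟩ := ball_of_pos_vol hAc hAcl hpos
  have htopA := vol_top_of_ray hr hd hball hrayA
  rw [htopA] at hfin
  exact absurd hfin (lt_irrefl _)


/-- Lemma 2.1 (1/n-concavity): the cross covariogram of closed convex sets satisfying the
standing hypothesis is `1/n`-concave on its support `K + (-L)`. -/
theorem covariogram_one_div_n_concave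
    (n : ℕ) (hn : 1 < n)
    (K L : Set (EuclideanSpace ℝ (Fin n)))
    (hKne : K.Nonempty) (hKclosed : IsClosed K) (hKconv : Convex ℝ K)
    (hLne : L.Nonempty) (hLclosed : IsClosed L) (hLconv : Convex ℝ L)
    (g : EuclideanSpace ℝ (Fin n) → ℝ)
    (hg : ∀ x, g x = (volume (K ∩ (x +ᵥ L))).toReal)
    (a : EuclideanSpace ℝ (Fin n))
    (hpos : 0 < volume (K ∩ (a +ᵥ L)))
    (hfin : volume (K ∩ (a +ᵥ L)) < ⊤) :
    ∀ x₀ ∈ K + -L, ∀ x₁ ∈ K + -L, ∀ t ∈ Icc (0 : ℝ) 1,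
      (1 - t) * g x₀ ^ (1 / (n : ℝ)) + t * g x₁ ^ (1 / (n : ℝ))
        ≤ g ((1 - t) • x₀ + t • x₁) ^ (1 / (n : ℝ)) := by
  intro x₀ hx₀ x₁ hx₁ t ht
  have hn0 : 0 < n := by omega
  -- nonemptiness of the intersections on the support
  have hne : ∀ x ∈ K + -L, (K ∩ (x +ᵥ L)).Nonempty := by
    rintro x ⟨k, hk, l', hl', rfl⟩
    refine ⟨k, hk, -l', Set.mem_neg.1 hl', ?_⟩
    simp only [vadd_eq_add]
    abel
  -- edge cases
  rcases eq_or_lt_of_le ht.1 with rfl | ht0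
  · simp
  rcases eq_or_lt_of_le ht.2 with rfl | ht1
  · simp
  -- main case
  have hsub : (1 - t) • (K ∩ (x₀ +ᵥ L)) + t • (K ∩ (x₁ +ᵥ L))
      ⊆ K ∩ (((1 - t) • x₀ + t • x₁) +ᵥ L) := by
    rintro _ ⟨_, ⟨u, hu, rfl⟩, _, ⟨v, hv, rfl⟩, rfl⟩
    constructor
    · exact hKconv hu.1 hv.1 (by linarith) ht0.le (by ring)
    · obtain ⟨l₀, hl₀, hu2⟩ := hu.2
      obtain ⟨l₁, hl₁, hv2⟩ := hv.2
      refine ⟨(1 - t) • l₀ + t • l₁, hLconv hl₀ hl₁ (by linarith) ht0.le (by ring), ?_⟩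
      simp only [vadd_eq_add] at hu2 hv2 ⊢
      rw [← hu2, ← hv2, smul_add, smul_add]
      abel
  have hfinAll := vol_inter_fin hKclosed hKconv hLclosed hLconv hpos hfin
  have h := bm_additive n hn0 ht0 ht1
    (hKconv.inter (hLconv.vadd x₀ : Convex ℝ (x₀ +ᵥ L)))
    (hKconv.inter (hLconv.vadd x₁ : Convex ℝ (x₁ +ᵥ L)))
    (hKclosed.inter (hLclosed.vadd x₀ : IsClosed (x₀ +ᵥ L)))
    (hKclosed.inter (hLclosed.vadd x₁ : IsClosed (x₁ +ᵥ L)))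
    (hne x₀ hx₀) (hne x₁ hx₁) (hfinAll x₀) (hfinAll x₁)
    (hKclosed.inter (hLclosed.vadd _ : IsClosed (((1 - t) • x₀ + t • x₁) +ᵥ L)))
    (hfinAll _) hsub
  rw [hg x₀, hg x₁, hg ((1 - t) • x₀ + t • x₁)]
  exact h
end prodstep
end

section
/- Let n > 1 and let K, L ⊆ ℝⁿ be closed convex sets such that K ∩ L is compact and nonempty. If the boundaries satisfy ∂K ∩ ∂L = ∅, then either L is contained in the interior of K, or K is contained in the interior of L. -/
open Set

/-- A preconnected set meeting both `s` and its complement meets the frontier of `s`. -/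
lemma aux_inter_frontier {X : Type*} [TopologicalSpace X] {t s : Set X}
    (ht : IsPreconnected t) (h1 : (t ∩ s).Nonempty) (h2 : (t \ s).Nonempty) :
    (t ∩ frontier s).Nonempty := by
  by_contra hf
  rw [not_nonempty_iff_eq_empty] at hf
  have hcover : t ⊆ interior s ∪ (closure s)ᶜ := by
    intro x hx
    have hxf : x ∉ frontier s := fun h => (eq_empty_iff_forall_notMem.1 hf x) ⟨hx, h⟩
    by_cases hxs : x ∈ closure s
    · left
      by_contra hxi
      exact hxf ⟨hxs, hxi⟩
    · right; exact hxs
  obtain ⟨u1, hu1t, hu1s⟩ := h1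
  obtain ⟨u2, hu2t, hu2s⟩ := h2
  have h1' : (t ∩ interior s).Nonempty := by
    refine ⟨u1, hu1t, ?_⟩
    rcases hcover hu1t with h | h
    · exact h
    · exact absurd (subset_closure hu1s) h
  have h2' : (t ∩ (closure s)ᶜ).Nonempty := by
    refine ⟨u2, hu2t, ?_⟩
    rcases hcover hu2t with h | h
    · exact absurd (interior_subset h) hu2s
    · exact h
  obtain ⟨x, -, hx1, hx2⟩ := ht (interior s) (closure s)ᶜ isOpen_interior
    isClosed_closure.isOpen_compl hcover h1' h2'
  exact hx2 (subset_closure (interior_subset hx1))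

/-- If a convex set `K` meets a closed set `L` but avoids its frontier along `K ∩ L`,
then `K ⊆ interior L`. -/
lemma aux_subset_interior {E : Type*} [NormedAddCommGroup E] [NormedSpace ℝ E]
    {K L : Set E} (hKconv : Convex ℝ K) (hLclosed : IsClosed L)
    (hne : (K ∩ L).Nonempty) (h : K ∩ L ∩ frontier L = ∅) : K ⊆ interior L := by
  obtain ⟨x0, hx0K, hx0L⟩ := hne
  intro k hk
  have hkL : k ∈ L := by
    by_contra hkL
    have hseg : segment ℝ x0 k ⊆ K := hKconv.segment_subset hx0K hk
    obtain ⟨p, hpseg, hpf⟩ := aux_inter_frontier (convex_segment x0 k).isPreconnected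
      ⟨x0, left_mem_segment ℝ x0 k, hx0L⟩ ⟨k, right_mem_segment ℝ x0 k, hkL⟩
    have hpL : p ∈ L := hLclosed.frontier_subset hpf
    exact (eq_empty_iff_forall_notMem.1 h p) ⟨⟨hseg hpseg, hpL⟩, hpf⟩
  by_contra hki
  have : k ∈ frontier L := by rw [hLclosed.frontier_eq]; exact ⟨hkL, hki⟩
  exact (eq_empty_iff_forall_notMem.1 h k) ⟨⟨hk, hkL⟩, this⟩

/-- Lemma 2.4 (Intersection of boundaries): if `K, L` are closed convex sets in `ℝⁿ`, `n > 1`,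
with `K ∩ L` compact and nonempty, and `∂K ∩ ∂L = ∅`, then one of the sets contains the
other in its interior. -/
theorem boundary_intersection
    (n : ℕ) (hn : 1 < n)
    (K L : Set (EuclideanSpace ℝ (Fin n)))
    (hKclosed : IsClosed K) (hKconv : Convex ℝ K)
    (hLclosed : IsClosed L) (hLconv : Convex ℝ L)
    (hcomp : IsCompact (K ∩ L)) (hne : (K ∩ L).Nonempty)
    (hbd : frontier K ∩ frontier L = ∅) :
    L ⊆ interior K ∨ K ⊆ interior L := by
  set C := K ∩ L with hC
  have hCclosed : IsClosed C := hKclosed.inter hLclosed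
  have hCconv : Convex ℝ C := hKconv.inter hLconv
  -- key dichotomy
  rcases eq_empty_or_nonempty (C ∩ frontier L) with hB | hB
  · exact Or.inr (aux_subset_interior hKconv hLclosed hne hB)
  rcases eq_empty_or_nonempty (C ∩ frontier K) with hA | hA
  · refine Or.inl (aux_subset_interior hLconv hKclosed ?_ ?_)
    · rwa [inter_comm]
    · rwa [inter_comm L K]
  -- both nonempty: contradiction via connectedness of frontier C
  exfalso
  have hbd' : ∀ x, x ∈ frontier K → x ∈ frontier L → False := fun x h1 h2 =>
    (eq_empty_iff_forall_notMem.1 hbd x) ⟨h1, h2⟩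
  have hintC : interior C = interior K ∩ interior L := interior_inter
  -- frontier C is preconnected
  have hpc : IsPreconnected (frontier C) := by
    rcases eq_empty_or_nonempty (interior C) with hi | hi
    · rw [hCclosed.frontier_eq, hi, diff_empty]
      exact hCconv.isPreconnected
    · obtain ⟨h, -, -, hfr⟩ :=
        exists_homeomorph_image_interior_closure_frontier_eq_unitBall hCconv hi hcomp.isBounded
      have hrank : 1 < Module.rank ℝ (EuclideanSpace ℝ (Fin n)) := by
        rw [← Module.finrank_eq_rank ℝ (EuclideanSpace ℝ (Fin n)),
          finrank_euclideanSpace_fin]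
        exact_mod_cast hn
      have hsc : IsPreconnected (Metric.sphere (0 : EuclideanSpace ℝ (Fin n)) 1) :=
        (isConnected_sphere hrank 0 zero_le_one).isPreconnected
      have : frontier C = h.symm '' Metric.sphere 0 1 := by
        rw [← hfr]
        simp [image_image]
      rw [this]
      exact hsc.image _ h.symm.continuous.continuousOn
  -- points of frontier C ∩ interior L and frontier C ∩ interior K
  have hmem : ∀ x ∈ C, x ∉ interior K → x ∈ interior L := by
    intro x hx hxK
    have hxfK : x ∈ frontier K := by
      rw [hKclosed.frontier_eq]; exact ⟨hx.1, hxK⟩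
    by_contra hxL
    exact hbd' x hxfK (by rw [hLclosed.frontier_eq]; exact ⟨hx.2, hxL⟩)
  have hcover : frontier C ⊆ interior K ∪ interior L := by
    intro x hx
    have hxC : x ∈ C := hCclosed.frontier_subset hx
    by_cases hxK : x ∈ interior K
    · exact Or.inl hxK
    · exact Or.inr (hmem x hxC hxK)
  obtain ⟨a, haC, hafK⟩ := hA
  obtain ⟨b, hbC, hbfL⟩ := hB
  have haiK : a ∉ interior K := hafK.2
  have hbiL : b ∉ interior L := hbfL.2
  have haiL : a ∈ interior L := hmem a haC haiK
  have hbiK : b ∈ interior K := by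
    by_contra hbK
    exact hbiL (hmem b hbC hbK)
  have hafC : a ∈ frontier C := by
    rw [hCclosed.frontier_eq, hintC]
    exact ⟨haC, fun hh => haiK hh.1⟩
  have hbfC : b ∈ frontier C := by
    rw [hCclosed.frontier_eq, hintC]
    exact ⟨hbC, fun hh => hbiL hh.2⟩
  obtain ⟨x, hxF, hxK, hxL⟩ := hpc (interior K) (interior L) isOpen_interior isOpen_interior
    hcover ⟨b, hbfC, hbiK⟩ ⟨a, hafC, haiL⟩
  have : x ∈ interior C := by rw [hintC]; exact ⟨hxK, hxL⟩
  rw [hCclosed.frontier_eq] at hxF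
  exact hxF.2 this
end

section
/- Let K, L ⊆ ℝⁿ be closed convex sets with K ∩ L ≠ ∅, and let v ∈ ℝⁿ with v ≠ 0. If z + v ∈ K and z − v ∈ K for every z ∈ K ∩ L, then K ∩ L = K' ∩ L, where K' := {x + tv : x ∈ K, t ∈ ℝ} is the cylinder in the direction v generated by K. -/
open Set

private lemma cyl_aux {n : ℕ} {K L : Set (EuclideanSpace ℝ (Fin n))}
    (hKclosed : IsClosed K) (hKconv : Convex ℝ K) (hLconv : Convex ℝ L)
    {v : EuclideanSpace ℝ (Fin n)}
    (hseg : ∀ z ∈ K ∩ L, z + v ∈ K)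
    {w : EuclideanSpace ℝ (Fin n)} (hwK : w ∈ K) (hwL : w ∈ L)
    {x : EuclideanSpace ℝ (Fin n)} (hxK : x ∈ K) {t : ℝ} (ht : 0 < t)
    (hyL : x + t • v ∈ L) : x + t • v ∈ K := by
  set y := x + t • v with hy
  set f : ℝ → EuclideanSpace ℝ (Fin n) := fun l => w + l • (y - w) with hf
  have hfc : Continuous f := continuous_const.add (continuous_id.smul continuous_const)
  set S : Set ℝ := Icc (0:ℝ) 1 ∩ f ⁻¹' K with hS
  have hS0 : (0:ℝ) ∈ S := ⟨⟨le_refl 0, zero_le_one⟩, by simp [hf, hwK]⟩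
  have hSbdd : BddAbove S := ⟨1, fun l hl => hl.1.2⟩
  have hSclosed : IsClosed S := isClosed_Icc.inter (hKclosed.preimage hfc)
  set l := sSup S with hl
  have hlS : l ∈ S := hSclosed.csSup_mem ⟨0, hS0⟩ hSbdd
  obtain ⟨⟨hl0, hl1⟩, hzK⟩ := hlS
  rw [mem_preimage] at hzK
  rcases eq_or_lt_of_le hl1 with h1 | h1
  · have h : f l = y := by rw [h1]; simp [hf]
    rwa [h] at hzK
  · exfalso
    have hzL : f l ∈ L := by
      have hmem := hLconv hwL hyL (by linarith : (0:ℝ) ≤ 1 - l) hl0 (by ring)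
      have : (1 - l) • w + l • y = f l := by simp only [hf]; module
      rwa [this] at hmem
    have huK : f l + v ∈ K := hseg _ ⟨hzK, hzL⟩
    have hd : (0:ℝ) < l * t + 1 := by nlinarith
    have hd1 : (0:ℝ) < t + 1 := by linarith
    set μ : ℝ := (l * t + 1) / (t + 1) with hμ
    have hμpos : 0 < μ := div_pos hd hd1
    set α : ℝ := μ * t / (l * t + 1) with hα
    set β : ℝ := μ / (l * t + 1) with hβ
    have hα0 : 0 ≤ α := div_nonneg (mul_nonneg hμpos.le ht.le) hd.le
    have hβ0 : 0 ≤ β := div_nonneg hμpos.le hd.le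
    have hsum : α + β = 1 := by
      rw [hα, hβ, hμ]; field_simp
    have hK' : α • (f l + v) + β • x ∈ K := hKconv huK hxK hα0 hβ0 hsum
    have heq : f μ = α • (f l + v) + β • x := by
      simp only [hf, hy, hα, hβ, hμ]
      match_scalars <;> field_simp <;> ring
    have hμS : μ ∈ S := by
      refine ⟨⟨hμpos.le, ?_⟩, ?_⟩
      · rw [hμ, div_le_one hd1]; nlinarith
      · rw [mem_preimage, heq]; exact hK'
    have h1' : μ ≤ l := le_csSup hSbdd hμS
    have h2' : l < μ := by rw [hμ, lt_div_iff₀ hd1]; nlinarith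
    linarith

/-- Lemma 4.1 (cylinder lemma): if `z ± v ∈ K` for every `z ∈ K ∩ L`, then
`K ∩ L = K' ∩ L`, where `K'` is the cylinder in the direction `v` generated by `K`. -/
theorem cylinder_lemma
    (n : ℕ)
    (K L : Set (EuclideanSpace ℝ (Fin n)))
    (hKclosed : IsClosed K) (hKconv : Convex ℝ K)
    (hLclosed : IsClosed L) (hLconv : Convex ℝ L)
    (hne : (K ∩ L).Nonempty)
    (v : EuclideanSpace ℝ (Fin n)) (hv : v ≠ 0)
    (hseg : ∀ z ∈ K ∩ L, z + v ∈ K ∧ z - v ∈ K) :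
    K ∩ L = {y | ∃ x ∈ K, ∃ t : ℝ, y = x + t • v} ∩ L := by
  obtain ⟨w, hwK, hwL⟩ := hne
  apply Subset.antisymm
  · rintro y ⟨hyK, hyL⟩
    exact ⟨⟨y, hyK, 0, by simp⟩, hyL⟩
  · rintro y ⟨⟨x, hxK, t, rfl⟩, hyL⟩
    refine ⟨?_, hyL⟩
    rcases lt_trichotomy t 0 with ht | ht | ht
    · have hyL' : x + (-t) • (-v) ∈ L := by
        have : x + (-t) • (-v) = x + t • v := by module
        rwa [this]
      have := cyl_aux hKclosed hKconv hLconv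
        (fun z hz => by simpa [sub_eq_add_neg] using (hseg z hz).2)
        hwK hwL hxK (neg_pos.mpr ht) hyL'
      have he : x + (-t) • (-v) = x + t • v := by module
      rwa [he] at this
    · simpa [ht] using hxK
    · exact cyl_aux hKclosed hKconv hLconv (fun z hz => (hseg z hz).1)
        hwK hwL hxK ht hyL
end

section
/- Let K, L ⊆ ℝⁿ be closed convex sets with K ∩ L ≠ ∅, let v ∈ ℝⁿ and λ ∈ (0,1]. If z + (λz + v) ∈ K and z − (λz + v) ∈ K for every z ∈ K ∩ L, then K ∩ L = K'' ∩ L, where K'' := {−(1/λ)v + t(x + (1/λ)v) : x ∈ K, t ≥ 0} is the convex cone with vertex −(1/λ)v generated by K. -/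
open Set Filter Topology

set_option maxHeartbeats 1000000

/-- Lemma 5.1 (cone lemma): if `z ± (λz + v) ∈ K` for every `z ∈ K ∩ L`, then
`K ∩ L = K'' ∩ L`, where `K''` is the convex cone with vertex `-(1/λ)v` generated by `K`. -/
theorem cone_lemma
    (n : ℕ)
    (K L : Set (EuclideanSpace ℝ (Fin n)))
    (hKclosed : IsClosed K) (hKconv : Convex ℝ K)
    (hLclosed : IsClosed L) (hLconv : Convex ℝ L)
    (hne : (K ∩ L).Nonempty)
    (v : EuclideanSpace ℝ (Fin n)) (l : ℝ) (hl : l ∈ Ioc (0 : ℝ) 1)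
    (hseg : ∀ z ∈ K ∩ L, z + (l • z + v) ∈ K ∧ z - (l • z + v) ∈ K) :
    K ∩ L =
      {y | ∃ x ∈ K, ∃ t : ℝ, 0 ≤ t ∧
          y = -((1 / l) • v) + t • (x + (1 / l) • v)} ∩ L := by
  obtain ⟨q, hqK, hqL⟩ := hne
  obtain ⟨hl0, hl1⟩ := hl
  have hlne : l ≠ 0 := ne_of_gt hl0
  ext y
  simp only [mem_inter_iff, mem_setOf_eq]
  constructor
  · rintro ⟨hyK, hyL⟩
    exact ⟨⟨y, hyK, 1, zero_le_one, by module⟩, hyL⟩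
  rintro ⟨⟨x, hxK, t, ht, rfl⟩, hyL⟩
  refine ⟨?_, hyL⟩
  have main : ∀ s : ℝ, (s = 1 ∨ s = -1) → 0 ≤ s * (t - 1) →
      (∀ w, w ∈ K → w ∈ L → w + s • (l • w + v) ∈ K) →
      -((1 / l) • v) + t • (x + (1 / l) • v) ∈ K := by
    intro s hs hst hsegs
    have hs2 : s * s = 1 := by obtain rfl | rfl := hs <;> norm_num
    have hsl : 0 ≤ 1 + s * l := by obtain rfl | rfl := hs <;> nlinarith
    have hc0 : 0 ≤ (1 + s * l) * (s * (t - 1)) := mul_nonneg hsl hst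
    have hΔ : (0:ℝ) < (1 + s * l) * (s * (t - 1)) + l := by linarith
    set β : ℝ := (1 + s * l) * (s * (t - 1)) / ((1 + s * l) * (s * (t - 1)) + l) with hβ
    set lam : ℝ := s * (t - 1) / ((1 + s * l) * (s * (t - 1)) + l) with hlam
    have hβ0 : 0 ≤ β := div_nonneg hc0 hΔ.le
    have hβ1 : β < 1 := (div_lt_one hΔ).2 (by linarith)
    have hlam0 : 0 ≤ lam := div_nonneg hst hΔ.le
    have hlam1 : lam ≤ 1 := by
      rw [hlam, div_le_one hΔ]
      nlinarith [mul_nonneg hl0.le ht]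
    have hD1 : ((1 + s * l) * (s * (t - 1)) + l) * β = (1 + s * l) * (s * (t - 1)) := by
      rw [hβ, mul_div_assoc', mul_div_right_comm, div_self (ne_of_gt hΔ), one_mul]
    have hD2 : ((1 + s * l) * (s * (t - 1)) + l) * lam = s * (t - 1) := by
      rw [hlam, mul_div_assoc', mul_div_right_comm, div_self (ne_of_gt hΔ), one_mul]
    have hid : ∀ (P : EuclideanSpace ℝ (Fin n)) (u' : ℝ), v = l • P →
        q + (β * u' + (1 - β)) • ((-P + t • (x + P)) - q)
          = lam • ((q + u' • ((-P + t • (x + P)) - q))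
              + s • (l • (q + u' • ((-P + t • (x + P)) - q)) + v))
            + (1 - lam) • x := by
      intro P u' hP
      apply smul_right_injective (EuclideanSpace ℝ (Fin n)) (ne_of_gt hΔ)
      rw [hP]
      obtain rfl | rfl := hs
      · match_scalars <;>
          first
          | linear_combination ((1:ℝ) - u') * hD1 + (-(1 + 1 * l) * (1 - u')) * hD2
          | linear_combination ((u' - 1) * (t - 1)) * hD1
              + (-((1 + 1 * l) * u' * (t - 1) + 1 * l)) * hD2
          | linear_combination ((u' - 1) * t) * hD1 + (1 - (1 + 1 * l) * u' * t) * hD2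
      · match_scalars <;>
          first
          | linear_combination ((1:ℝ) - u') * hD1 + (-(1 + (-1) * l) * (1 - u')) * hD2
          | linear_combination ((u' - 1) * (t - 1)) * hD1
              + (-((1 + (-1) * l) * u' * (t - 1) - l)) * hD2
          | linear_combination ((u' - 1) * t) * hD1 + (1 - (1 + (-1) * l) * u' * t) * hD2
    have hP : v = l • ((1 / l) • v) := by
      rw [smul_smul, mul_one_div, div_self hlne, one_smul]
    have key : ∀ k : ℕ,
        q + (1 - β ^ k) • ((-((1 / l) • v) + t • (x + (1 / l) • v)) - q) ∈ K := by
      intro k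
      induction k with
      | zero => simpa using hqK
      | succ k ih =>
        have hbk1 : β ^ k ≤ 1 := pow_le_one₀ hβ0 hβ1.le
        have hbk0 : (0:ℝ) ≤ β ^ k := pow_nonneg hβ0 k
        have hwL : q + (1 - β ^ k) • ((-((1 / l) • v) + t • (x + (1 / l) • v)) - q) ∈ L := by
          have h2 := hLconv hqL hyL (by linarith : (0:ℝ) ≤ 1 - (1 - β ^ k))
            (by linarith : (0:ℝ) ≤ 1 - β ^ k) (by ring)
          convert h2 using 1
          module
        have he := hsegs _ ih hwL
        have hcomb := hKconv he hxK hlam0 (by linarith : (0:ℝ) ≤ 1 - lam) (by ring)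
        have h1 : (1 : ℝ) - β ^ (k+1) = β * (1 - β ^ k) + (1 - β) := by ring
        rw [h1, hid ((1 / l) • v) (1 - β ^ k) hP]
        exact hcomb
    have hβten : Tendsto (fun k : ℕ => β ^ k) atTop (𝓝 0) :=
      tendsto_pow_atTop_nhds_zero_of_lt_one hβ0 hβ1
    have hten : Tendsto
        (fun k : ℕ => q + (1 - β ^ k) • ((-((1 / l) • v) + t • (x + (1 / l) • v)) - q)) atTop
        (𝓝 (q + ((1:ℝ) - 0) • ((-((1 / l) • v) + t • (x + (1 / l) • v)) - q))) :=
      tendsto_const_nhds.add ((tendsto_const_nhds.sub hβten).smul_const _)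
    have h := hKclosed.mem_of_tendsto hten (Filter.Eventually.of_forall key)
    simpa using h
  obtain hts | hts := le_total 1 t
  · exact main 1 (Or.inl rfl) (by nlinarith) (fun w hwK hwL => by
      simpa using (hseg w ⟨hwK, hwL⟩).1)
  · exact main (-1) (Or.inr rfl) (by nlinarith) (fun w hwK hwL => by
      have h := (hseg w ⟨hwK, hwL⟩).2
      have h2 : w + (-1 : ℝ) • (l • w + v) = w - (l • w + v) := by module
      rw [h2]; exact h)
end

section
/- Let n ≥ 1 and let K, L ⊆ ℝⁿ be nonempty closed convex sets. If there exists a ∈ ℝⁿ with 0 < g_{K,L}(a) < ∞, then g_{K,L}(x) < ∞ for every x ∈ ℝⁿ. -/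
open MeasureTheory Set Pointwise

/-- Midpoint step: if the covariogram is infinite at `y` and the intersection at `z` is
nonempty, then the covariogram is infinite at the midpoint of `y` and `z`. -/
lemma covariogram_step {n : ℕ} {K L : Set (EuclideanSpace ℝ (Fin n))}
    (hKconv : Convex ℝ K) (hLconv : Convex ℝ L)
    {y z : EuclideanSpace ℝ (Fin n)}
    (hy : volume (K ∩ (y +ᵥ L)) = ⊤)
    {c : EuclideanSpace ℝ (Fin n)} (hcK : c ∈ K) (hcL : c ∈ z +ᵥ L) :
    volume (K ∩ (((1/2 : ℝ) • (y + z)) +ᵥ L)) = ⊤ := by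
  set C : Set (EuclideanSpace ℝ (Fin n)) := K ∩ (y +ᵥ L) with hC
  have hsub : ((1/2 : ℝ) • c) +ᵥ ((1/2 : ℝ) • C) ⊆ K ∩ (((1/2 : ℝ) • (y + z)) +ᵥ L) := by
    rintro w hw
    rcases hw with ⟨v, hv, rfl⟩
    rcases hv with ⟨u, hu, rfl⟩
    obtain ⟨huK, l, hl, hul⟩ := hu
    obtain ⟨l', hl', hcl'⟩ := hcL
    constructor
    · have := hKconv huK hcK (by norm_num : (0:ℝ) ≤ 1/2) (by norm_num : (0:ℝ) ≤ 1/2)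
        (by norm_num)
      simpa [vadd_eq_add, add_comm] using this
    · refine ⟨(1/2 : ℝ) • l + (1/2 : ℝ) • l', ?_, ?_⟩
      · exact hLconv hl hl' (by norm_num) (by norm_num) (by norm_num)
      · have : u = y + l := by simpa [vadd_eq_add] using hul.symm
        have hc : c = z + l' := by simpa [vadd_eq_add] using hcl'.symm
        simp only [vadd_eq_add, this, hc]
        module
  have hmeas : volume (((1/2 : ℝ) • c) +ᵥ ((1/2 : ℝ) • C)) = ⊤ := by
    rw [measure_vadd, Measure.addHaar_smul]
    rw [hy, ENNReal.mul_top]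
    simp [ENNReal.ofReal_eq_zero, not_le]
  exact top_le_iff.mp (hmeas ▸ measure_mono hsub)

/-- Standing hypothesis consequence: if `0 < g_{K,L}(a) < ∞` for some `a`, then
`g_{K,L}(x) < ∞` for every `x`. -/
theorem covariogram_finite_everywhere
    (n : ℕ) (hn : 1 ≤ n)
    (K L : Set (EuclideanSpace ℝ (Fin n)))
    (hKne : K.Nonempty) (hKclosed : IsClosed K) (hKconv : Convex ℝ K)
    (hLne : L.Nonempty) (hLclosed : IsClosed L) (hLconv : Convex ℝ L)
    (a : EuclideanSpace ℝ (Fin n))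
    (hpos : 0 < volume (K ∩ (a +ᵥ L)))
    (hfin : volume (K ∩ (a +ᵥ L)) < ⊤) :
    ∀ x : EuclideanSpace ℝ (Fin n), volume (K ∩ (x +ᵥ L)) < ⊤ := by
  intro x
  by_contra hx
  have hxtop : volume (K ∩ (x +ᵥ L)) = ⊤ := by
    simpa [lt_top_iff_ne_top] using hx
  -- the set `K ∩ (a +ᵥ L)` is convex with positive measure, hence has nonempty interior
  have hDconv : Convex ℝ (K ∩ (a +ᵥ L)) := hKconv.inter (hLconv.vadd a)
  have hint : (interior (K ∩ (a +ᵥ L))).Nonempty := by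
    by_contra h
    rw [Set.not_nonempty_iff_eq_empty] at h
    have hspan : affineSpan ℝ (K ∩ (a +ᵥ L)) ≠ ⊤ := by
      intro htop
      rw [← hDconv.interior_nonempty_iff_affineSpan_eq_top] at htop
      exact htop.ne_empty h
    have : volume (K ∩ (a +ᵥ L)) = 0 :=
      measure_mono_null (subset_affineSpan ℝ _)
        (Measure.addHaar_affineSubspace _ _ hspan)
    exact hpos.ne' this
  obtain ⟨p, hp⟩ := hint
  obtain ⟨r, hr, hball⟩ := Metric.isOpen_iff.mp isOpen_interior p hp
  have hpmem : p ∈ K ∩ (a +ᵥ L) := interior_subset hp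
  have hc : p ∈ K := hpmem.1
  -- sequence approaching `a` with infinite covariogram
  have hseq : ∀ k : ℕ, volume (K ∩ ((a + ((1/2 : ℝ)^k) • (x - a)) +ᵥ L)) = ⊤ := by
    intro k
    induction k with
    | zero => simpa using hxtop
    | succ k ih =>
      have hcL : p ∈ a +ᵥ L := hpmem.2
      have h := covariogram_step hKconv hLconv ih hc hcL
      have : (1/2 : ℝ) • ((a + ((1/2 : ℝ)^k) • (x - a)) + a)
          = a + ((1/2 : ℝ)^(k+1)) • (x - a) := by
        rw [pow_succ]
        module
      rwa [this] at h
  -- choose `k` with the displacement smaller than `r`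
  obtain ⟨k, hk⟩ : ∃ k : ℕ, ‖((1/2 : ℝ)^k) • (x - a)‖ < r := by
    rcases eq_or_ne (x - a) 0 with h0 | h0
    · exact ⟨0, by simpa [h0] using hr⟩
    · have hx0 : (0:ℝ) < ‖x - a‖ := norm_pos_iff.mpr h0
      obtain ⟨k, hk⟩ := exists_pow_lt_of_lt_one (div_pos hr hx0) (by norm_num : (1/2 : ℝ) < 1)
      refine ⟨k, ?_⟩
      rw [norm_smul, Real.norm_eq_abs]
      have : |(1/2 : ℝ)^k| = (1/2 : ℝ)^k := abs_of_pos (by positivity)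
      rw [this]
      calc (1/2 : ℝ)^k * ‖x - a‖ < (r / ‖x - a‖) * ‖x - a‖ := by
            exact mul_lt_mul_of_pos_right hk hx0
        _ = r := div_mul_cancel₀ r hx0.ne'
  set t : EuclideanSpace ℝ (Fin n) := ((1/2 : ℝ)^k) • (x - a) with ht
  -- the reflected intersection is nonempty: `p - t ∈ K ∩ ((a - t) +ᵥ L)`
  have hpt : p - t ∈ Metric.ball p r := by
    simp only [Metric.mem_ball, dist_eq_norm]
    simpa using hk
  have hptmem : p - t ∈ K ∩ (a +ᵥ L) := interior_subset (hball hpt)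
  have hptK : p - t ∈ K := hptmem.1
  have hptL : p - t ∈ (a - t) +ᵥ L := by
    obtain ⟨l, hl, hpl⟩ := hpmem.2
    exact ⟨l, hl, by simp only [vadd_eq_add] at hpl ⊢; rw [← hpl]; abel⟩
  -- apply the midpoint step at `y = a + t`, `z = a - t`
  have hmid := covariogram_step hKconv hLconv (hseq k) hptK hptL
  have heq : (1/2 : ℝ) • ((a + t) + (a - t)) = a := by module
  rw [heq] at hmid
  exact hfin.ne (by simpa using hmid)
end
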